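/- arXiv:0902.0549 — 5 statements merged into one kernel-verified Lean document; each statement's English description precedes it below -/
import Mathlib

section
/- The Clifford algebra C(p,q,z) decomposes as a vector space direct sum C = C(p,q) ⊕ R, where C(p,q) is the subalgebra generated by {e_λ : λ ∈ P ∪ M} and R is the ideal generated by {e_λ : λ ∈ Z}. -/
open Classical in
/-- The weight of generator `i`: `1` on `P`, `-1` on `M`, `0` elsewhere. -/
noncomputable def cliffordWeight {ι : Type} (P M : Set ι) (i : ι) : ℝ :=
  if i ∈ P then 1 else if i ∈ M then -1 else 0

/-- The diagonal bilinear form `B(x,y) = ∑ i, w i * x i * y i` on `ι →₀ ℝ`. -/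
noncomputable def cliffordBilin {ι : Type} (P M : Set ι) :
    (ι →₀ ℝ) →ₗ[ℝ] (ι →₀ ℝ) →ₗ[ℝ] ℝ :=
  Finsupp.lsum ℝ fun i =>
    LinearMap.toSpanSingleton ℝ ((ι →₀ ℝ) →ₗ[ℝ] ℝ) (cliffordWeight P M i • Finsupp.lapply i)

/-- The quadratic form of `C(p,q,z)`. -/
noncomputable def cliffordQ {ι : Type} (P M : Set ι) : QuadraticForm ℝ (ι →₀ ℝ) :=
  LinearMap.BilinMap.toQuadraticMap (cliffordBilin P M)

/-- The Clifford algebra `C(p,q,z)` (`Z` is the complement of `P ∪ M` in `ι`). -/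
noncomputable abbrev Cl {ι : Type} (P M : Set ι) := CliffordAlgebra (cliffordQ P M)

/-- The generator `e_i` of `C(p,q,z)`. -/
noncomputable def gen {ι : Type} (P M : Set ι) (i : ι) : Cl P M :=
  CliffordAlgebra.ι (cliffordQ P M) (Finsupp.single i 1)

/-- The product `e_I` over a finite ordered subset `I`. -/
noncomputable def prodGen {ι : Type} [LinearOrder ι] (P M : Set ι) (s : Finset ι) : Cl P M :=
  ((s.sort (· ≤ ·)).map (gen P M)).prod

/-- The subalgebra `C(p,q)` generated by the `e_λ`, `λ ∈ P ∪ M`. -/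
noncomputable def Cpq {ι : Type} (P M : Set ι) : Subalgebra ℝ (Cl P M) :=
  Algebra.adjoin ℝ (gen P M '' (P ∪ M))

/-- The ideal generated by the nilpotent generators `e_λ`, `λ ∈ Z`. -/
noncomputable def nilGenIdeal {ι : Type} (P M Z : Set ι) : TwoSidedIdeal (Cl P M) :=
  TwoSidedIdeal.span (gen P M '' Z)

/-- The nil radical of a ring: the supremum (sum) of all nil two-sided ideals. -/
def nilRad (A : Type*) [Ring A] : TwoSidedIdeal A :=
  sSup {I : TwoSidedIdeal A | ∀ x ∈ I, IsNilpotent x}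

/-- A two-sided ideal `I` is nilpotent: `Iⁿ = 0`, phrased via products of `n` elements. -/
def TwoSidedIdeal.IsNilpotentIdeal {A : Type*} [Ring A] (I : TwoSidedIdeal A) : Prop :=
  ∃ n : ℕ, 0 < n ∧ ∀ l : List A, l.length = n → (∀ x ∈ l, x ∈ I) → l.prod = 0

/-- A two-sided ideal is prime. -/
def TwoSidedIdeal.IsPrimeIdeal {A : Type*} [Ring A] (I : TwoSidedIdeal A) : Prop :=
  I ≠ ⊤ ∧ ∀ J K : TwoSidedIdeal A, (∀ a ∈ J, ∀ b ∈ K, a * b ∈ I) → J ≤ I ∨ K ≤ I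

section Aux

variable {ι : Type} (P M : Set ι)

open Classical in
/-- Projection of `ι →₀ ℝ` onto coordinates in `P ∪ M`. -/
noncomputable def projPM : (ι →₀ ℝ) →ₗ[ℝ] (ι →₀ ℝ) :=
  Finsupp.lsum ℝ fun i => if i ∈ P ∪ M then Finsupp.lsingle i else 0

open Classical in
lemma projPM_single (i : ι) (c : ℝ) :
    projPM P M (Finsupp.single i c) =
      if i ∈ P ∪ M then Finsupp.single i c else 0 := by
  rw [projPM, Finsupp.lsum_single]
  split <;> simp

open Classical in
lemma projPM_apply (v : ι →₀ ℝ) (j : ι) :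
    projPM P M v j = if j ∈ P ∪ M then v j else 0 := by
  induction v using Finsupp.induction_linear with
  | zero => simp
  | add f g hf hg =>
      rw [map_add, Finsupp.add_apply, hf, hg, Finsupp.add_apply]
      split <;> simp
  | single i c =>
      rw [projPM_single]
      rcases eq_or_ne i j with rfl | h
      · split <;> simp_all
      · split <;> simp [Finsupp.single_apply, h] <;> split <;> simp

open Classical in
lemma weight_eq_zero {i : ι} (h : i ∉ P ∪ M) : cliffordWeight P M i = 0 := by
  simp only [Set.mem_union, not_or] at h
  simp [cliffordWeight, h.1, h.2]

lemma bilin_single (i : ι) (c : ℝ) :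
    cliffordBilin P M (Finsupp.single i c) =
      c • (cliffordWeight P M i • Finsupp.lapply i) := by
  rw [cliffordBilin, Finsupp.lsum_single, LinearMap.toSpanSingleton_apply]

lemma bilin_projPM_left (x y : ι →₀ ℝ) :
    cliffordBilin P M (projPM P M x) y = cliffordBilin P M x y := by
  classical
  have : (cliffordBilin P M).comp (projPM P M) = cliffordBilin P M := by
    apply Finsupp.lhom_ext
    intro i c
    rw [LinearMap.comp_apply, projPM_single]
    by_cases h : i ∈ P ∪ M
    · rw [if_pos h]
    · rw [if_neg h, map_zero, bilin_single, weight_eq_zero P M h]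
      simp
  exact LinearMap.congr_fun (LinearMap.congr_fun this x) y

lemma bilin_projPM_right (x y : ι →₀ ℝ) :
    cliffordBilin P M x (projPM P M y) = cliffordBilin P M x y := by
  classical
  have : (cliffordBilin P M x).comp (projPM P M) = cliffordBilin P M x := by
    apply Finsupp.lhom_ext
    intro j c
    rw [LinearMap.comp_apply, projPM_single]
    by_cases h : j ∈ P ∪ M
    · rw [if_pos h]
    · rw [if_neg h, map_zero]
      -- show cliffordBilin P M x (single j c) = 0
      have : (cliffordBilin P M).flip (Finsupp.single j c) = 0 := by
        apply Finsupp.lhom_ext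
        intro i c'
        rw [LinearMap.flip_apply, bilin_single]
        rcases eq_or_ne i j with rfl | hij
        · simp [weight_eq_zero P M h]
        · simp [Finsupp.single_eq_of_ne' (Ne.symm hij)]
      have := LinearMap.congr_fun this x
      simpa using this.symm
  exact LinearMap.congr_fun this y

/-- `projPM` as an isometry of the quadratic form. -/
noncomputable def projIso : cliffordQ P M →qᵢ cliffordQ P M where
  toLinearMap := projPM P M
  map_app' := by
    intro v
    show cliffordQ P M (projPM P M v) = cliffordQ P M v
    rw [cliffordQ, LinearMap.BilinMap.toQuadraticMap_apply,
      LinearMap.BilinMap.toQuadraticMap_apply, bilin_projPM_left, bilin_projPM_right]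

/-- The projection algebra homomorphism `π : Cl P M → Cl P M` killing Z-generators. -/
noncomputable def projAlg : Cl P M →ₐ[ℝ] Cl P M :=
  CliffordAlgebra.map (projIso P M)

lemma projAlg_ι (v : ι →₀ ℝ) :
    projAlg P M (CliffordAlgebra.ι (cliffordQ P M) v)
      = CliffordAlgebra.ι (cliffordQ P M) (projPM P M v) :=
  CliffordAlgebra.map_apply_ι _ v

open Classical in
lemma projAlg_gen (i : ι) :
    projAlg P M (gen P M i) = if i ∈ P ∪ M then gen P M i else 0 := by
  rw [gen, projAlg_ι, projPM_single]
  split <;> simp [gen]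

lemma gen_mem_Cpq {i : ι} (hi : i ∈ P ∪ M) : gen P M i ∈ Cpq P M :=
  Algebra.subset_adjoin (Set.mem_image_of_mem _ hi)

lemma ι_mem_Cpq {v : ι →₀ ℝ} (hv : ↑v.support ⊆ P ∪ M) :
    CliffordAlgebra.ι (cliffordQ P M) v ∈ Cpq P M := by
  have hv' : v = v.sum fun i c => Finsupp.single i c := (Finsupp.sum_single v).symm
  rw [hv', map_finsuppSum]
  refine sum_mem ?_
  intro i hi
  have h1 : Finsupp.single i (v i) = v i • Finsupp.single i (1:ℝ) := by
    rw [Finsupp.smul_single, smul_eq_mul, mul_one]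
  show CliffordAlgebra.ι (cliffordQ P M) (Finsupp.single i (v i)) ∈ Cpq P M
  rw [h1, map_smul]
  exact Subalgebra.smul_mem _ (gen_mem_Cpq P M (hv hi)) _

lemma projAlg_mem_Cpq (x : Cl P M) : projAlg P M x ∈ Cpq P M := by
  classical
  induction x using CliffordAlgebra.induction with
  | algebraMap r => rw [AlgHom.commutes]; exact Subalgebra.algebraMap_mem _ r
  | ι v =>
      rw [projAlg_ι]
      apply ι_mem_Cpq
      intro j hj
      have := projPM_apply P M v j
      by_contra hjPM
      rw [if_neg hjPM] at this
      exact (Finsupp.mem_support_iff.mp hj) this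
  | mul x y hx hy => rw [map_mul]; exact Subalgebra.mul_mem _ hx hy
  | add x y hx hy => rw [map_add]; exact Subalgebra.add_mem _ hx hy

lemma projAlg_fixes_Cpq {x : Cl P M} (hx : x ∈ Cpq P M) : projAlg P M x = x := by
  classical
  induction hx using Algebra.adjoin_induction with
  | mem a ha =>
      obtain ⟨i, hi, rfl⟩ := ha
      rw [projAlg_gen, if_pos hi]
  | algebraMap r => exact AlgHom.commutes _ r
  | add a b _ _ ha hb => rw [map_add, ha, hb]
  | mul a b _ _ ha hb => rw [map_mul, ha, hb]

variable (Z : Set ι)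

lemma ι_mem_nilGenIdeal {v : ι →₀ ℝ} (hv : ↑v.support ⊆ Z) :
    CliffordAlgebra.ι (cliffordQ P M) v ∈ nilGenIdeal P M Z := by
  have hv' : v = v.sum fun i c => Finsupp.single i c := (Finsupp.sum_single v).symm
  rw [hv', map_finsuppSum]
  refine sum_mem ?_
  intro i hi
  have h1 : Finsupp.single i (v i) = v i • Finsupp.single i (1:ℝ) := by
    rw [Finsupp.smul_single, smul_eq_mul, mul_one]
  show CliffordAlgebra.ι (cliffordQ P M) (Finsupp.single i (v i)) ∈ nilGenIdeal P M Z
  rw [h1, map_smul]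
  have hgen : gen P M i ∈ nilGenIdeal P M Z :=
    TwoSidedIdeal.subset_span ⟨i, hv hi, rfl⟩
  rw [Algebra.smul_def]
  exact (nilGenIdeal P M Z).mul_mem_left _ _ hgen

lemma sub_projAlg_mem (hU : P ∪ M ∪ Z = Set.univ) (x : Cl P M) :
    x - projAlg P M x ∈ nilGenIdeal P M Z := by
  classical
  induction x using CliffordAlgebra.induction with
  | algebraMap r => rw [AlgHom.commutes, sub_self]; exact TwoSidedIdeal.zero_mem _
  | ι v =>
      rw [projAlg_ι, ← map_sub]
      apply ι_mem_nilGenIdeal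
      intro j hj
      have hjv := Finsupp.mem_support_iff.mp hj
      have hPM : j ∉ P ∪ M := by
        intro hjPM
        apply hjv
        rw [Finsupp.sub_apply, projPM_apply, if_pos hjPM, sub_self]
      have : j ∈ P ∪ M ∪ Z := hU ▸ Set.mem_univ j
      rcases this with h | h
      · exact absurd h hPM
      · exact h
  | mul x y hx hy =>
      have key : x * y - projAlg P M (x * y)
          = (x - projAlg P M x) * y + projAlg P M x * (y - projAlg P M y) := by
        rw [map_mul, sub_mul, mul_sub]
        abel
      rw [key]
      exact TwoSidedIdeal.add_mem _
        ((nilGenIdeal P M Z).mul_mem_right _ _ hx)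
        ((nilGenIdeal P M Z).mul_mem_left _ _ hy)
  | add x y hx hy =>
      have key : x + y - projAlg P M (x + y)
          = (x - projAlg P M x) + (y - projAlg P M y) := by
        rw [map_add]; abel
      rw [key]
      exact TwoSidedIdeal.add_mem _ hx hy

lemma nilGenIdeal_le_ker (hPZ : Disjoint P Z) (hMZ : Disjoint M Z) :
    nilGenIdeal P M Z ≤ TwoSidedIdeal.ker (projAlg P M) := by
  classical
  intro x hx
  refine TwoSidedIdeal.mem_span_iff.mp hx _ ?_
  rintro _ ⟨i, hi, rfl⟩
  rw [SetLike.mem_coe, TwoSidedIdeal.mem_ker, projAlg_gen]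
  rw [if_neg]
  rintro (h | h)
  · exact Set.disjoint_left.mp hPZ h hi
  · exact Set.disjoint_left.mp hMZ h hi

end Aux

theorem clifford_vectorSpace_decomposition' {ι : Type} (P M Z : Set ι)
    (hPM : Disjoint P M) (hPZ : Disjoint P Z) (hMZ : Disjoint M Z)
    (hU : P ∪ M ∪ Z = Set.univ) :
    IsCompl (Cpq P M).toSubmodule
      (Submodule.span ℝ (nilGenIdeal P M Z : Set (Cl P M))) := by
  constructor
  · rw [disjoint_iff_inf_le]
    rintro x ⟨hx1, hx2⟩
    have hspan : Submodule.span ℝ (nilGenIdeal P M Z : Set (Cl P M))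
        ≤ LinearMap.ker (projAlg P M).toLinearMap := by
      rw [Submodule.span_le]
      intro y hy
      rw [SetLike.mem_coe, LinearMap.mem_ker]
      exact (TwoSidedIdeal.mem_ker (projAlg P M)).mp (nilGenIdeal_le_ker P M Z hPZ hMZ hy)
    have h0 : projAlg P M x = 0 := hspan hx2
    have hfix : projAlg P M x = x := projAlg_fixes_Cpq P M hx1
    rw [Submodule.mem_bot]
    rw [← hfix, h0]
  · rw [codisjoint_iff_le_sup]
    intro x _
    refine Submodule.mem_sup.mpr ⟨projAlg P M x, projAlg_mem_Cpq P M x,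
      x - projAlg P M x, Submodule.subset_span (sub_projAlg_mem P M Z hU x), ?_⟩
    rw [add_sub_cancel]

/-- `C(p,q,z) = C(p,q) ⊕ R` as real vector spaces, where `C(p,q)` is the
subalgebra generated by `{e_λ : λ ∈ P ∪ M}` and `R` is the ideal generated by
`{e_λ : λ ∈ Z}`. -/
theorem clifford_vectorSpace_decomposition {ι : Type} (P M Z : Set ι)
    (hPM : Disjoint P M) (hPZ : Disjoint P Z) (hMZ : Disjoint M Z)
    (hU : P ∪ M ∪ Z = Set.univ) :
    IsCompl (Cpq P M).toSubmodule
      (Submodule.span ℝ (nilGenIdeal P M Z : Set (Cl P M))) := by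
  exact clifford_vectorSpace_decomposition' P M Z hPM hPZ hMZ hU
end

section
/- If the subalgebra C(p,q) of the Clifford algebra C = C(p,q,z) is simple, then every non-trivial two-sided ideal I of C is contained in the nil radical R. -/
namespace ClAux

variable {ι : Type} (P M : Set ι)

lemma weight_zero {i : ι} (hiP : i ∉ P) (hiM : i ∉ M) : cliffordWeight P M i = 0 := by
  simp [cliffordWeight, hiP, hiM]

lemma bilin_single_left (i : ι) (a : ℝ) (y : ι →₀ ℝ) :
    cliffordBilin P M (Finsupp.single i a) y = a * (cliffordWeight P M i * y i) := by
  simp [cliffordBilin, Finsupp.lsum_single, LinearMap.toSpanSingleton_apply,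
    LinearMap.smul_apply, Finsupp.lapply_apply, smul_eq_mul, mul_assoc]

lemma bilin_apply (x y : ι →₀ ℝ) :
    cliffordBilin P M x y = ∑ j ∈ x.support, x j * (cliffordWeight P M j * y j) := by
  rw [cliffordBilin, Finsupp.lsum_apply, Finsupp.sum, LinearMap.sum_apply]
  refine Finset.sum_congr rfl fun j _ => ?_
  simp [LinearMap.toSpanSingleton_apply, Finsupp.lapply_apply, smul_eq_mul, mul_assoc]

lemma Q_single (i : ι) (a : ℝ) :
    cliffordQ P M (Finsupp.single i a) = a * (cliffordWeight P M i * a) := by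
  rw [cliffordQ, LinearMap.BilinMap.toQuadraticMap_apply, bilin_single_left,
    Finsupp.single_eq_same]

lemma polar_single_zero {i : ι} (hw : cliffordWeight P M i = 0) (v : ι →₀ ℝ) :
    QuadraticMap.polar (cliffordQ P M) (Finsupp.single i 1) v = 0 := by
  rw [cliffordQ, LinearMap.BilinMap.polar_toQuadraticMap, bilin_single_left, bilin_apply]
  rw [hw]
  simp only [mul_zero, zero_mul, one_mul, zero_add]
  refine Finset.sum_eq_zero fun j _ => ?_
  rcases eq_or_ne j i with rfl | hne
  · rw [hw, zero_mul, mul_zero]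
  · classical rw [Finsupp.single_apply, if_neg hne.symm]
    simp

lemma gen_mul_iota {i : ι} (hw : cliffordWeight P M i = 0) (v : ι →₀ ℝ) :
    gen P M i * CliffordAlgebra.ι (cliffordQ P M) v
      = -(CliffordAlgebra.ι (cliffordQ P M) v * gen P M i) := by
  have h := CliffordAlgebra.ι_mul_ι_add_swap (Q := cliffordQ P M) (Finsupp.single i 1) v
  rw [polar_single_zero P M hw, map_zero] at h
  rw [gen]
  exact eq_neg_of_add_eq_zero_left h

lemma gen_sq_zero {i : ι} (hw : cliffordWeight P M i = 0) : gen P M i * gen P M i = 0 := by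
  rw [gen, CliffordAlgebra.ι_sq_scalar, Q_single, hw]
  simp

lemma gen_mul_comm {i : ι} (hw : cliffordWeight P M i = 0) (x : Cl P M) :
    gen P M i * x = CliffordAlgebra.involute x * gen P M i := by
  induction x using CliffordAlgebra.induction with
  | algebraMap r => rw [AlgHom.commutes, Algebra.commutes]
  | ι v => rw [gen_mul_iota P M hw, CliffordAlgebra.involute_ι, neg_mul]
  | mul a b ha hb => rw [← mul_assoc, ha, mul_assoc, hb, ← mul_assoc, map_mul]
  | add a b ha hb => rw [mul_add, ha, hb, map_add, add_mul]

lemma mul_gen_comm {i : ι} (hw : cliffordWeight P M i = 0) (x : Cl P M) :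
    x * gen P M i = gen P M i * CliffordAlgebra.involute x := by
  have h := gen_mul_comm P M hw (CliffordAlgebra.involute x)
  rw [CliffordAlgebra.involute_involute] at h
  exact h.symm

lemma gen_anticomm {i : ι} (hw : cliffordWeight P M i = 0) (j : ι) :
    gen P M i * gen P M j = -(gen P M j * gen P M i) := by
  rw [gen_mul_comm P M hw (gen P M j), gen, CliffordAlgebra.involute_ι, neg_mul]

lemma gen_mul_prod_zero {i : ι} (hw : cliffordWeight P M i = 0) :
    ∀ l : List ι, i ∈ l → gen P M i * (l.map (gen P M)).prod = 0
  | [], h => absurd h List.not_mem_nil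
  | j :: t, h => by
    rw [List.map_cons, List.prod_cons, ← mul_assoc]
    rcases eq_or_ne i j with rfl | hne
    · rw [gen_sq_zero P M hw, zero_mul]
    · have hit : i ∈ t := (List.mem_cons.mp h).resolve_left hne
      rw [gen_anticomm P M hw, neg_mul, mul_assoc, gen_mul_prod_zero hw t hit, mul_zero, neg_zero]

lemma prod_zero_of_dup :
    ∀ l : List ι, (∀ i ∈ l, cliffordWeight P M i = 0) → ¬ l.Nodup →
      (l.map (gen P M)).prod = 0
  | [], _, hnd => absurd List.nodup_nil hnd
  | j :: t, hw, hnd => by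
    rw [List.map_cons, List.prod_cons]
    by_cases hj : j ∈ t
    · exact gen_mul_prod_zero P M (hw j List.mem_cons_self) t hj
    · have : ¬ t.Nodup := fun hnt => hnd (List.nodup_cons.mpr ⟨hj, hnt⟩)
      rw [prod_zero_of_dup t (fun i hi => hw i (List.mem_cons_of_mem j hi)) this, mul_zero]


open Classical in
noncomputable def projPM : (ι →₀ ℝ) →ₗ[ℝ] (ι →₀ ℝ) :=
  Finsupp.lsum ℝ fun i => if i ∈ P ∪ M then Finsupp.lsingle i else 0

open Classical in
lemma projPM_single (i : ι) (a : ℝ) :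
    projPM P M (Finsupp.single i a) = if i ∈ P ∪ M then Finsupp.single i a else 0 := by
  rw [projPM, Finsupp.lsum_single]
  split_ifs with h <;> simp

lemma bilin_proj_eq :
    (cliffordBilin P M).compl₁₂ (projPM P M) (projPM P M) = cliffordBilin P M := by
  classical
  refine Finsupp.lhom_ext fun i a => Finsupp.lhom_ext fun j b => ?_
  rw [LinearMap.compl₁₂_apply, projPM_single, projPM_single]
  by_cases hi : i ∈ P ∪ M
  · by_cases hj : j ∈ P ∪ M
    · rw [if_pos hi, if_pos hj]
    · rw [if_pos hi, if_neg hj, map_zero, bilin_single_left, Finsupp.single_apply,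
        if_neg (fun h : j = i => hj (h ▸ hi)), mul_zero, mul_zero]
  · rw [if_neg hi, map_zero, LinearMap.zero_apply, bilin_single_left,
      weight_zero P M (fun h => hi (Or.inl h)) (fun h => hi (Or.inr h)), zero_mul, mul_zero]

lemma Q_proj (v : ι →₀ ℝ) : cliffordQ P M (projPM P M v) = cliffordQ P M v := by
  have h := congrFun (congrArg (fun f => (DFunLike.coe f : (ι →₀ ℝ) → (ι →₀ ℝ) →ₗ[ℝ] ℝ))
    (bilin_proj_eq P M)) v
  rw [cliffordQ, LinearMap.BilinMap.toQuadraticMap_apply,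
    LinearMap.BilinMap.toQuadraticMap_apply]
  calc cliffordBilin P M (projPM P M v) (projPM P M v)
      = ((cliffordBilin P M).compl₁₂ (projPM P M) (projPM P M)) v v := by
        rw [LinearMap.compl₁₂_apply]
    _ = cliffordBilin P M v v := by rw [bilin_proj_eq]

noncomputable def phi : Cl P M →ₐ[ℝ] Cl P M :=
  CliffordAlgebra.lift (cliffordQ P M)
    ⟨(CliffordAlgebra.ι (cliffordQ P M)).comp (projPM P M), fun v => by
      rw [LinearMap.comp_apply, CliffordAlgebra.ι_sq_scalar, Q_proj]⟩

lemma phi_iota (v : ι →₀ ℝ) :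
    phi P M (CliffordAlgebra.ι (cliffordQ P M) v)
      = CliffordAlgebra.ι (cliffordQ P M) (projPM P M v) :=
  CliffordAlgebra.lift_ι_apply _ _ v

open Classical in
lemma phi_gen (i : ι) :
    phi P M (gen P M i) = if i ∈ P ∪ M then gen P M i else 0 := by
  rw [gen, phi_iota, projPM_single]
  split_ifs with h
  · rfl
  · rw [map_zero]

section
variable {A : Type*} [Ring A] {α : Type*}

lemma list_sum_mul (l : List α) (f : α → A) (b : A) :
    (l.map f).sum * b = (l.map fun x => f x * b).sum := by
  induction l with
  | nil => simp
  | cons a t ih => simp [add_mul, ih]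

lemma mul_list_sum (l : List α) (f : α → A) (a : A) :
    a * (l.map f).sum = (l.map fun x => a * f x).sum := by
  induction l with
  | nil => simp
  | cons b t ih => simp [mul_add, ih]

lemma list_sum_neg (l : List α) (f : α → A) :
    -(l.map f).sum = (l.map fun x => -(f x)).sum := by
  induction l with
  | nil => simp
  | cons b t ih => simp [neg_add, ih, add_comm]

end

variable (Z : Set ι)

lemma gen_mem_nilGenIdeal {i : ι} (hi : i ∈ Z) : gen P M i ∈ nilGenIdeal P M Z :=
  TwoSidedIdeal.subset_span ⟨i, hi, rfl⟩

lemma iota_single_mem {i : ι} (hi : i ∈ Z) (a : ℝ) :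
    CliffordAlgebra.ι (cliffordQ P M) (Finsupp.single i a) ∈ nilGenIdeal P M Z := by
  have : Finsupp.single i a = a • Finsupp.single i (1 : ℝ) := by
    rw [Finsupp.smul_single, smul_eq_mul, mul_one]
  rw [this, map_smul, Algebra.smul_def]
  exact (nilGenIdeal P M Z).mul_mem_left _ _ (gen_mem_nilGenIdeal P M Z hi)

lemma sub_phi_mem (hU : P ∪ M ∪ Z = Set.univ) (x : Cl P M) :
    x - phi P M x ∈ nilGenIdeal P M Z := by
  induction x using CliffordAlgebra.induction with
  | algebraMap r => rw [AlgHom.commutes, sub_self]; exact (nilGenIdeal P M Z).zero_mem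
  | ι v =>
    rw [phi_iota, ← map_sub]
    induction v using Finsupp.induction_linear with
    | zero => simp only [map_zero, sub_zero]; exact (nilGenIdeal P M Z).zero_mem
    | add f g hf hg =>
      have : f + g - projPM P M (f + g) = (f - projPM P M f) + (g - projPM P M g) := by
        rw [map_add]; abel
      rw [this, map_add]
      exact (nilGenIdeal P M Z).add_mem hf hg
    | single i a =>
      classical
      rw [projPM_single]
      by_cases hi : i ∈ P ∪ M
      · rw [if_pos hi, sub_self, map_zero]; exact (nilGenIdeal P M Z).zero_mem
      · rw [if_neg hi, sub_zero]
        have hiZ : i ∈ Z := by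
          have : i ∈ P ∪ M ∪ Z := hU ▸ Set.mem_univ i
          rcases this with h | h
          · exact absurd h hi
          · exact h
        exact iota_single_mem P M Z hiZ a
  | mul a b ha hb =>
    have : a * b - phi P M (a * b)
        = (a - phi P M a) * b + phi P M a * (b - phi P M b) := by
      rw [map_mul, sub_mul, mul_sub]; abel
    rw [this]
    exact (nilGenIdeal P M Z).add_mem
      ((nilGenIdeal P M Z).mul_mem_right _ _ ha)
      ((nilGenIdeal P M Z).mul_mem_left _ _ hb)
  | add a b ha hb =>
    have : a + b - phi P M (a + b) = (a - phi P M a) + (b - phi P M b) := by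
      rw [map_add]; abel
    rw [this]
    exact (nilGenIdeal P M Z).add_mem ha hb

lemma phi_mem_Cpq (x : Cl P M) : phi P M x ∈ Cpq P M := by
  induction x using CliffordAlgebra.induction with
  | algebraMap r => rw [AlgHom.commutes]; exact (Cpq P M).algebraMap_mem r
  | ι v =>
    rw [phi_iota]
    induction v using Finsupp.induction_linear with
    | zero => simp only [map_zero]; exact (Cpq P M).zero_mem
    | add f g hf hg => rw [map_add, map_add]; exact (Cpq P M).add_mem hf hg
    | single i a =>
      classical
      rw [projPM_single]
      by_cases hi : i ∈ P ∪ M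
      · rw [if_pos hi]
        have : Finsupp.single i a = a • Finsupp.single i (1 : ℝ) := by
          rw [Finsupp.smul_single, smul_eq_mul, mul_one]
        rw [this, map_smul]
        exact (Cpq P M).smul_mem (Algebra.subset_adjoin ⟨i, hi, rfl⟩) a
      · rw [if_neg hi, map_zero]; exact (Cpq P M).zero_mem
  | mul a b ha hb => rw [map_mul]; exact (Cpq P M).mul_mem ha hb
  | add a b ha hb => rw [map_add]; exact (Cpq P M).add_mem ha hb

lemma phi_fix {y : Cl P M} (hy : y ∈ Cpq P M) : phi P M y = y := by
  have hle : Cpq P M ≤ AlgHom.equalizer (phi P M) (AlgHom.id ℝ (Cl P M)) := by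
    refine Algebra.adjoin_le ?_
    rintro _ ⟨i, hi, rfl⟩
    show phi P M (gen P M i) = gen P M i
    classical
    rw [phi_gen, if_pos hi]
  exact hle hy

lemma nilpotent_of_mem_nilGenIdeal (hPZ : Disjoint P Z) (hMZ : Disjoint M Z)
    {r : Cl P M} (hr : r ∈ nilGenIdeal P M Z) : IsNilpotent r := by
  classical
  have hw : ∀ i ∈ Z, cliffordWeight P M i = 0 := fun i hi =>
    weight_zero P M (Set.disjoint_right.mp hPZ hi) (Set.disjoint_right.mp hMZ hi)
  -- Step A: finite representation
  have hrep : ∃ lp : List (ι × Cl P M), (∀ q ∈ lp, q.1 ∈ Z) ∧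
      r = (lp.map fun q => gen P M q.1 * q.2).sum := by
    set carrier : Set (Cl P M) := {x | ∃ lp : List (ι × Cl P M), (∀ q ∈ lp, q.1 ∈ Z) ∧
      x = (lp.map fun q => gen P M q.1 * q.2).sum} with hcar
    have hzero : (0 : Cl P M) ∈ carrier := ⟨[], by simp, by simp⟩
    have hadd : ∀ {x y}, x ∈ carrier → y ∈ carrier → x + y ∈ carrier := by
      rintro x y ⟨l1, h1, rfl⟩ ⟨l2, h2, rfl⟩
      exact ⟨l1 ++ l2, fun q hq => ((List.mem_append.mp hq).elim (h1 q) (h2 q)),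
        by rw [List.map_append, List.sum_append]⟩
    have hneg : ∀ {x}, x ∈ carrier → -x ∈ carrier := by
      rintro x ⟨l, h, rfl⟩
      refine ⟨l.map fun q => (q.1, -q.2), ?_, ?_⟩
      · rintro q hq; obtain ⟨p, hp, rfl⟩ := List.mem_map.mp hq; exact h p hp
      · rw [list_sum_neg, List.map_map]
        refine congrArg List.sum (List.map_congr_left fun q hq => ?_)
        simp [mul_neg]
    have hml : ∀ {x y}, y ∈ carrier → x * y ∈ carrier := by
      rintro x y ⟨l, h, rfl⟩
      refine ⟨l.map fun q => (q.1, CliffordAlgebra.involute x * q.2), ?_, ?_⟩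
      · rintro q hq; obtain ⟨p, hp, rfl⟩ := List.mem_map.mp hq; exact h p hp
      · rw [mul_list_sum, List.map_map]
        refine congrArg List.sum (List.map_congr_left fun q hq => ?_)
        show x * (gen P M q.1 * q.2) = gen P M q.1 * (CliffordAlgebra.involute x * q.2)
        rw [← mul_assoc, mul_gen_comm P M (hw q.1 (h q hq)), mul_assoc]
    have hmr : ∀ {x y}, x ∈ carrier → x * y ∈ carrier := by
      rintro x y ⟨l, h, rfl⟩
      refine ⟨l.map fun q => (q.1, q.2 * y), ?_, ?_⟩
      · rintro q hq; obtain ⟨p, hp, rfl⟩ := List.mem_map.mp hq; exact h p hp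
      · rw [list_sum_mul, List.map_map]
        refine congrArg List.sum (List.map_congr_left fun q hq => ?_)
        show gen P M q.1 * q.2 * y = gen P M q.1 * (q.2 * y)
        rw [mul_assoc]
    have hsub : gen P M '' Z ⊆
        ((TwoSidedIdeal.mk' carrier hzero hadd hneg hml hmr : TwoSidedIdeal (Cl P M)) :
          Set (Cl P M)) := by
      rintro _ ⟨i, hi, rfl⟩
      rw [TwoSidedIdeal.coe_mk']
      exact ⟨[(i, (1 : Cl P M))], by simpa using hi, by simp⟩
    have hrD := TwoSidedIdeal.mem_span_iff.mp hr
      (TwoSidedIdeal.mk' carrier hzero hadd hneg hml hmr) hsub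
    rwa [TwoSidedIdeal.mem_mk'] at hrD
  obtain ⟨lp, hlpZ, hreq⟩ := hrep
  set ix : List ι := lp.map Prod.fst with hix
  let Pn : ℕ → Cl P M → Prop := fun n x => ∃ L : List (List ι × Cl P M),
    (∀ q ∈ L, q.1.length = n ∧ ∀ i ∈ q.1, i ∈ Z ∧ i ∈ ix) ∧
    x = (L.map fun q => (q.1.map (gen P M)).prod * q.2).sum
  have czero : ∀ n, Pn n 0 := fun n => ⟨[], by simp, by simp⟩
  have cadd : ∀ {n x y}, Pn n x → Pn n y → Pn n (x + y) := by
    rintro n x y ⟨L1, h1, rfl⟩ ⟨L2, h2, rfl⟩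
    exact ⟨L1 ++ L2, fun q hq => ((List.mem_append.mp hq).elim (h1 q) (h2 q)),
      by rw [List.map_append, List.sum_append]⟩
  have cterm : ∀ {n x}, Pn n x → ∀ i, i ∈ Z → i ∈ ix → ∀ c,
      Pn (n+1) (x * (gen P M i * c)) := by
    rintro n x ⟨L, hL, rfl⟩ i hiZ hiix c
    refine ⟨L.map fun q => (q.1 ++ [i], CliffordAlgebra.involute q.2 * c), ?_, ?_⟩
    · rintro q hq
      obtain ⟨p, hp, rfl⟩ := List.mem_map.mp hq
      refine ⟨by simp [(hL p hp).1], fun j hj => ?_⟩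
      rcases List.mem_append.mp hj with h | h
      · exact (hL p hp).2 j h
      · rw [List.mem_singleton] at h; subst h; exact ⟨hiZ, hiix⟩
    · rw [list_sum_mul, List.map_map]
      refine congrArg List.sum (List.map_congr_left fun q hq => ?_)
      show (q.1.map (gen P M)).prod * q.2 * (gen P M i * c)
        = ((q.1 ++ [i]).map (gen P M)).prod * (CliffordAlgebra.involute q.2 * c)
      rw [List.map_append, List.prod_append]
      simp only [List.map_cons, List.map_nil, List.prod_cons, List.prod_nil, mul_one]
      simp only [mul_assoc]
      rw [← mul_assoc q.2 (gen P M i) c, mul_gen_comm P M (hw i hiZ) q.2]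
      simp only [mul_assoc]
  have cmulr : ∀ {n x}, Pn n x → Pn (n+1) (x * r) := by
    intro n x hx
    rw [hreq]
    have key : ∀ lp' : List (ι × Cl P M), (∀ q ∈ lp', q.1 ∈ Z ∧ q.1 ∈ ix) →
        Pn (n+1) (x * (lp'.map fun q => gen P M q.1 * q.2).sum) := by
      intro lp' hlp'
      induction lp' with
      | nil => simpa using czero (n+1)
      | cons p t ih =>
        rw [List.map_cons, List.sum_cons, mul_add]
        exact cadd
          (cterm hx p.1 (hlp' p List.mem_cons_self).1
            (hlp' p List.mem_cons_self).2 p.2)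
          (ih fun q hq => hlp' q (List.mem_cons_of_mem p hq))
    exact key lp fun q hq => ⟨hlpZ q hq, List.mem_map.mpr ⟨q, hq, rfl⟩⟩
  have cpow : ∀ n, Pn (n+1) (r ^ (n+1)) := by
    intro n
    induction n with
    | zero =>
      rw [pow_one]
      refine ⟨lp.map fun p => ([p.1], p.2), ?_, ?_⟩
      · rintro q hq
        obtain ⟨p, hp, rfl⟩ := List.mem_map.mp hq
        refine ⟨rfl, fun i hi => ?_⟩
        rw [List.mem_singleton] at hi; subst hi
        exact ⟨hlpZ p hp, List.mem_map.mpr ⟨p, hp, rfl⟩⟩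
      · rw [hreq, List.map_map]
        exact congrArg List.sum (List.map_congr_left fun p hp => by simp)
    | succ k ih => rw [pow_succ]; exact cmulr ih
  refine ⟨ix.dedup.length + 1, ?_⟩
  obtain ⟨L, hL, heq⟩ := cpow ix.dedup.length
  rw [heq]
  refine List.sum_eq_zero fun x hx => ?_
  obtain ⟨q, hq, rfl⟩ := List.mem_map.mp hx
  have hnd : ¬ q.1.Nodup := by
    intro hnod
    have hsub : q.1.toFinset ⊆ ix.dedup.toFinset := fun j hj => by
      rw [List.mem_toFinset] at hj ⊢
      exact List.mem_dedup.mpr ((hL q hq).2 j hj).2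
    have h1 : q.1.toFinset.card = q.1.length := List.toFinset_card_of_nodup hnod
    have h2 : ix.dedup.toFinset.card = ix.dedup.length :=
      List.toFinset_card_of_nodup (List.nodup_dedup ix)
    have hcard := Finset.card_le_card hsub
    rw [h1, h2, (hL q hq).1] at hcard
    omega
  rw [prod_zero_of_dup P M q.1 (fun i hi => hw i ((hL q hq).2 i hi).1) hnd, zero_mul]

end ClAux

set_option maxHeartbeats 2000000 in
set_option synthInstance.maxHeartbeats 400000 in
/-- if `C(p,q)` is simple then every non-trivial two-sided ideal of
`C(p,q,z)` is contained in the nil radical `R`. -/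
theorem ideal_le_nilradical_of_simple {ι : Type} (P M Z : Set ι)
    (hPM : Disjoint P M) (hPZ : Disjoint P Z) (hMZ : Disjoint M Z)
    (hU : P ∪ M ∪ Z = Set.univ)
    (hs : IsSimpleRing (Cpq P M))
    (I : TwoSidedIdeal (Cl P M)) (hI0 : I ≠ ⊥) (hIt : I ≠ ⊤) :
    I ≤ nilGenIdeal P M Z := by
  classical
  let φ' : Cl P M →ₐ[ℝ] Cpq P M :=
    (ClAux.phi P M).codRestrict (Cpq P M) (ClAux.phi_mem_Cpq P M)
  have hfix : ∀ y : Cpq P M, φ' (y : Cl P M) = y := fun y =>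
    Subtype.ext (ClAux.phi_fix P M y.2)
  have hzero : (0 : Cpq P M) ∈ φ' '' (I : Set (Cl P M)) := ⟨0, I.zero_mem, map_zero φ'⟩
  have hadd : ∀ {x y : Cpq P M}, x ∈ φ' '' (I : Set (Cl P M)) →
      y ∈ φ' '' (I : Set (Cl P M)) → x + y ∈ φ' '' (I : Set (Cl P M)) := by
    rintro _ _ ⟨a, ha, rfl⟩ ⟨b, hb, rfl⟩
    exact ⟨a + b, I.add_mem ha hb, map_add φ' a b⟩
  have hneg : ∀ {x : Cpq P M}, x ∈ φ' '' (I : Set (Cl P M)) →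
      -x ∈ φ' '' (I : Set (Cl P M)) := by
    rintro _ ⟨a, ha, rfl⟩
    exact ⟨-a, I.neg_mem ha, map_neg φ' a⟩
  have hml : ∀ {x y : Cpq P M}, y ∈ φ' '' (I : Set (Cl P M)) →
      x * y ∈ φ' '' (I : Set (Cl P M)) := by
    rintro x _ ⟨b, hb, rfl⟩
    exact ⟨(x : Cl P M) * b, I.mul_mem_left _ _ hb, by rw [map_mul, hfix x]⟩
  have hmr : ∀ {x y : Cpq P M}, x ∈ φ' '' (I : Set (Cl P M)) →
      x * y ∈ φ' '' (I : Set (Cl P M)) := by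
    rintro _ y ⟨a, ha, rfl⟩
    exact ⟨a * (y : Cl P M), I.mul_mem_right _ _ ha, by rw [map_mul, hfix y]⟩
  set L : TwoSidedIdeal (Cpq P M) :=
    TwoSidedIdeal.mk' (φ' '' (I : Set (Cl P M))) hzero hadd hneg hml hmr with hLdef
  rcases hs.simple.eq_bot_or_eq_top L with hbot | htop
  · -- every element of I is killed by φ, hence lies in the nil ideal
    intro x hx
    have hxL : φ' x ∈ L := by
      rw [hLdef, TwoSidedIdeal.mem_mk']
      exact ⟨x, hx, rfl⟩
    rw [hbot, TwoSidedIdeal.mem_bot] at hxL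
    have hφ0 : ClAux.phi P M x = 0 := by
      have := congrArg (Subtype.val : Cpq P M → Cl P M) hxL
      simpa [φ'] using this
    have hmem := ClAux.sub_phi_mem P M Z hU x
    rwa [hφ0, sub_zero] at hmem
  · exfalso
    have h1L : (1 : Cpq P M) ∈ L := by rw [htop]; exact TwoSidedIdeal.mem_top _
    rw [hLdef, TwoSidedIdeal.mem_mk'] at h1L
    obtain ⟨x, hxI, hx1⟩ := h1L
    have hφ1 : ClAux.phi P M x = 1 := by
      have := congrArg (Subtype.val : Cpq P M → Cl P M) hx1
      simpa [φ'] using this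
    have hR : 1 - x ∈ nilGenIdeal P M Z := by
      have hmem := ClAux.sub_phi_mem P M Z hU x
      rw [hφ1] at hmem
      have := (nilGenIdeal P M Z).neg_mem hmem
      rwa [neg_sub] at this
    have hnil : IsNilpotent (1 - x) := ClAux.nilpotent_of_mem_nilGenIdeal P M Z hPZ hMZ hR
    have hu : IsUnit x := by
      have h := hnil.isUnit_one_sub
      rwa [sub_sub_cancel] at h
    obtain ⟨u, hu⟩ := hu
    have h1I : (1 : Cl P M) ∈ I := by
      have h := I.mul_mem_left (↑u⁻¹ : Cl P M) x hxI
      rwa [← hu, Units.inv_mul] at h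
    apply hIt
    rw [eq_top_iff]
    intro y _
    have h := I.mul_mem_left y 1 h1I
    rwa [mul_one] at h
end

section
/- The Clifford algebra C = C(p,q,z) is left Artinian if and only if both p + q < ∞ and z < ∞, i.e., if and only if P ∪ M and Z are both finite. -/
namespace ClProof
variable {ι : Type} (P M : Set ι)

open Classical in
lemma bilin_single_single (i j : ι) :
    cliffordBilin P M (Finsupp.single i 1) (Finsupp.single j 1)
      = if j = i then cliffordWeight P M i else 0 := by
  simp only [cliffordBilin, Finsupp.lsum_single, LinearMap.toSpanSingleton_apply_one,
    LinearMap.smul_apply, Finsupp.lapply_apply, Finsupp.single_apply, smul_eq_mul,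
    mul_ite, mul_one, mul_zero]

lemma Q_single (i : ι) : cliffordQ P M (Finsupp.single i 1) = cliffordWeight P M i := by
  rw [cliffordQ, LinearMap.BilinMap.toQuadraticMap_apply, bilin_single_single, if_pos rfl]

lemma polar_single {i j : ι} (h : i ≠ j) :
    QuadraticMap.polar (cliffordQ P M) (Finsupp.single i 1) (Finsupp.single j 1) = 0 := by
  rw [cliffordQ, LinearMap.BilinMap.polar_toQuadraticMap, bilin_single_single,
    bilin_single_single, if_neg h, if_neg (Ne.symm h), add_zero]

lemma gen_sq (i : ι) :
    gen P M i * gen P M i = algebraMap ℝ (Cl P M) (cliffordWeight P M i) := by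
  rw [gen, CliffordAlgebra.ι_sq_scalar, Q_single]

lemma gen_anticomm {i j : ι} (h : i ≠ j) :
    gen P M i * gen P M j = -(gen P M j * gen P M i) := by
  have h2 := CliffordAlgebra.ι_mul_ι_add_swap (Q := cliffordQ P M)
    (Finsupp.single i 1) (Finsupp.single j 1)
  rw [polar_single P M h, map_zero] at h2
  exact eq_neg_of_add_eq_zero_left h2

/-- Contraction with the `i`-th coordinate functional. -/
noncomputable def Dk (i : ι) : Cl P M →ₗ[ℝ] Cl P M :=
  CliffordAlgebra.contractLeft (Q := cliffordQ P M) (Finsupp.lapply i)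

open Classical in
lemma Dk_gen_mul (i j : ι) (x : Cl P M) :
    Dk P M i (gen P M j * x)
      = (if j = i then (1:ℝ) else 0) • x - gen P M j * Dk P M i x := by
  have h := CliffordAlgebra.contractLeft_ι_mul (Q := cliffordQ P M)
    (d := Finsupp.lapply i) (Finsupp.single j 1) x
  simpa [Dk, gen, Finsupp.single_apply] using h

lemma Dk_one (i : ι) : Dk P M i (1 : Cl P M) = 0 := by
  simpa [Dk] using CliffordAlgebra.contractLeft_one (cliffordQ P M) (Finsupp.lapply i)

/-- Iterated contraction along a list of indices. -/
noncomputable def Fl : List ι → (Cl P M →ₗ[ℝ] Cl P M)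
  | [] => LinearMap.id
  | i :: t => (Fl t).comp (Dk P M i)

@[simp] lemma Fl_nil (x : Cl P M) : Fl P M [] x = x := rfl
@[simp] lemma Fl_cons (i : ι) (t : List ι) (x : Cl P M) :
    Fl P M (i :: t) x = Fl P M t (Dk P M i x) := rfl

/-- Products of generators along a list. -/
noncomputable def prodL (l : List ι) : Cl P M := (l.map (gen P M)).prod

@[simp] lemma prodL_nil : prodL P M [] = 1 := rfl
@[simp] lemma prodL_cons (i : ι) (t : List ι) :
    prodL P M (i :: t) = gen P M i * prodL P M t := by simp [prodL]

lemma Dk_prodL_zero (i : ι) (l : List ι) (h : i ∉ l) :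
    Dk P M i (prodL P M l) = 0 := by
  induction l with
  | nil => simpa using Dk_one P M i
  | cons j t ih =>
    have hji : j ≠ i := fun e => h (e ▸ (List.mem_cons_self (a := j) (l := t)))
    have hit : i ∉ t := fun e => h (List.mem_cons_of_mem _ e)
    rw [prodL_cons, Dk_gen_mul, if_neg hji, ih hit, zero_smul, mul_zero, sub_zero]

lemma Fl_prodL_self (l : List ι) (h : l.Nodup) : Fl P M l (prodL P M l) = 1 := by
  induction l with
  | nil => simp
  | cons i t ih =>
    rw [Fl_cons, prodL_cons, Dk_gen_mul, if_pos rfl,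
      Dk_prodL_zero P M i t (List.nodup_cons.mp h).1, mul_zero, sub_zero, one_smul]
    exact ih (List.nodup_cons.mp h).2

section Helpers
variable {A : Type*} [Ring A]

lemma anti_mul_even (p a b : A) (h1 : p*a = -(a*p)) (h2 : p*b = -(b*p)) :
    p * (a * b) = (a * b) * p := by
  rw [← mul_assoc, h1, neg_mul, mul_assoc, h2, mul_neg, neg_neg, mul_assoc]

lemma anti_mul_odd (p a b c : A) (h1 : p*a = -(a*p)) (h2 : p*b = -(b*p))
    (h3 : p*c = -(c*p)) : p * (a * (b * c)) = -((a * (b * c)) * p) := by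
  rw [← mul_assoc, h1, neg_mul, mul_assoc, anti_mul_even p b c h2 h3,
    ← mul_assoc, ← mul_assoc]

lemma sub_anti (a b c d : A) (h1 : a*c = -(c*a)) (h2 : a*d = -(d*a))
    (h3 : b*c = -(c*b)) (h4 : b*d = -(d*b)) :
    (a - b) * (c - d) = -((c - d) * (a - b)) := by
  have eL : (a - b) * (c - d) = a*c - a*d - b*c + b*d := by noncomm_ring
  have eR : (c - d) * (a - b) = c*a - c*b - d*a + d*b := by noncomm_ring
  rw [eL, eR, h1, h2, h3, h4]
  abel

/-- The abstract chain argument: a sequence of anticommuting square-zero elements with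
nonvanishing products contradicts the descending chain condition. -/
theorem not_artinian_of_seq (x : ℕ → A)
    (hsq : ∀ n, x n * x n = 0)
    (hanti : ∀ m n, m ≠ n → x m * x n = -(x n * x m))
    (hnz : ∀ n, ((List.range n).map x).prod ≠ 0) : ¬ IsArtinianRing A := by
  intro hA
  set p : ℕ → A := fun n => ((List.range n).map x).prod with hp
  have hpsucc : ∀ n, p (n+1) = p n * x n := by
    intro n; simp [hp, List.range_succ]
  -- move x n to the left through a product of x m's with m ≠ n
  have hmove : ∀ (n : ℕ) (l : List ℕ), (∀ m ∈ l, m ≠ n) →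
      (l.map x).prod * x n = ((-1 : A) ^ l.length) * (x n * (l.map x).prod) := by
    intro n l
    induction l with
    | nil => simp
    | cons m t ih =>
      intro hm
      have h1 : x m * x n = -(x n * x m) := hanti m n (hm m List.mem_cons_self)
      have h2 := ih (fun m' hm' => hm m' (List.mem_cons_of_mem _ hm'))
      have hcomm : (-1:A) ^ t.length * x m = x m * (-1:A) ^ t.length :=
        (((Commute.neg_one_left (x m))).pow_left t.length).eq
      rw [List.map_cons, List.prod_cons, List.length_cons]
      calc x m * (t.map x).prod * x n
          = x m * ((t.map x).prod * x n) := by rw [mul_assoc]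
        _ = x m * ((-1:A) ^ t.length * (x n * (t.map x).prod)) := by rw [h2]
        _ = (-1:A) ^ t.length * (x m * (x n * (t.map x).prod)) := by
            rw [← mul_assoc, ← hcomm, mul_assoc]
        _ = (-1:A) ^ t.length * (-(x n * (x m * (t.map x).prod))) := by
            rw [← mul_assoc (x m), h1, neg_mul, mul_assoc]
        _ = (-1:A) ^ (t.length + 1) * (x n * (x m * (t.map x).prod)) := by
            rw [pow_succ]; noncomm_ring
  have hmem : ∀ n, p (n+1) ∈ Ideal.span {p n} := by
    intro n
    rw [hpsucc n, hmove n (List.range n) (fun m hm => Nat.ne_of_lt (List.mem_range.mp hm))]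
    exact Submodule.mem_span_singleton.mpr
      ⟨(-1:A)^(List.range n).length * x n, by rw [smul_eq_mul, mul_assoc]⟩
  have hmono : ∀ n m, n ≤ m → Ideal.span {p m} ≤ Ideal.span {p n} := by
    intro n m h
    induction m, h using Nat.le_induction with
    | base => exact le_rfl
    | succ k hk ih =>
      exact le_trans (Ideal.span_le.mpr (Set.singleton_subset_iff.mpr (hmem k))) ih
  let f : ℕ →o (Ideal A)ᵒᵈ :=
    ⟨fun n => Ideal.span {p n}, fun n m h => hmono n m h⟩
  obtain ⟨n, hn⟩ := IsArtinian.monotone_stabilizes f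
  have hPn : p n ∈ Ideal.span {p (n+1)} := by
    have h1 := hn (n+1) (Nat.le_succ n)
    have h2 : Ideal.span {p n} = Ideal.span {p (n+1)} := congrArg OrderDual.ofDual h1
    rw [← h2]
    exact Ideal.subset_span rfl
  obtain ⟨c, hc⟩ := Submodule.mem_span_singleton.mp hPn
  apply hnz (n+1)
  show p (n+1) = 0
  rw [hpsucc n, ← hc, smul_eq_mul, hpsucc n, mul_assoc, mul_assoc, hsq n, mul_zero, mul_zero]
end Helpers

lemma anti_symm {A : Type*} [Ring A] {p q : A} (h : p*q = -(q*p)) : q*p = -(p*q) := by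
  rw [h, neg_neg]

lemma blk_sq_zero {A : Type*} [Ring A] [Algebra ℝ A] (a b c d : A) (s : ℝ) (hs : s*s = 1)
    (ha : a*a = algebraMap ℝ A s) (hb : b*b = algebraMap ℝ A s)
    (hc : c*c = algebraMap ℝ A s) (hd : d*d = algebraMap ℝ A s)
    (hab : a*b = -(b*a)) (hac : a*c = -(c*a)) (had : a*d = -(d*a))
    (hbc : b*c = -(c*b)) (hbd : b*d = -(d*b)) (hcd : c*d = -(d*c)) :
    (a - s • (b*(c*d))) * (a - s • (b*(c*d))) = 0 := by
  set m := b*(c*d) with hm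
  have h1 : a * m = -(m * a) := anti_mul_odd a b c d hab hac had
  have hcdcd : (c*d)*(c*d) = -(algebraMap ℝ A (s*s)) := by
    calc (c*d)*(c*d) = c*((d*c)*d) := by rw [mul_assoc, ← mul_assoc d c d]
      _ = c*(-(c*d)*d) := by rw [anti_symm hcd]
      _ = -((c*c)*(d*d)) := by noncomm_ring
      _ = -(algebraMap ℝ A s * algebraMap ℝ A s) := by rw [hc, hd]
      _ = -(algebraMap ℝ A (s*s)) := by rw [map_mul]
  have hmb : (c*d)*b = b*(c*d) := (anti_mul_even b c d hbc hbd).symm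
  have h2 : m * m = -(algebraMap ℝ A s) := by
    calc m * m = b*(((c*d)*b)*(c*d)) := by rw [hm]; noncomm_ring
      _ = b*((b*(c*d))*(c*d)) := by rw [hmb]
      _ = (b*b)*((c*d)*(c*d)) := by noncomm_ring
      _ = algebraMap ℝ A s * (-(algebraMap ℝ A (s*s))) := by rw [hb, hcdcd]
      _ = -(algebraMap ℝ A s) := by rw [hs, mul_neg, map_one, mul_one]
  have expand : (a - s•m)*(a - s•m) = a*a - s•(a*m) - s•(m*a) + (s*s)•(m*m) := by
    rw [sub_mul, mul_sub, mul_sub, smul_mul_assoc, mul_smul_comm, smul_mul_assoc, mul_smul_comm, smul_smul]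
    abel
  rw [expand, h1, ha, h2, hs, smul_neg, one_smul]
  abel

lemma blk_anti {A : Type*} [Ring A] [Algebra ℝ A] (a m a' m' : A) (s : ℝ)
    (h1 : a*a' = -(a'*a)) (h2 : a*m' = -(m'*a)) (h3 : m*a' = -(a'*m))
    (h4 : m*m' = -(m'*m)) :
    (a - s•m)*(a' - s•m') = -((a' - s•m')*(a - s•m)) := by
  apply sub_anti
  · exact h1
  · rw [mul_smul_comm, smul_mul_assoc, h2, smul_neg]
  · rw [mul_smul_comm, smul_mul_assoc, h3, smul_neg]
  · rw [mul_smul_comm, smul_mul_assoc, mul_smul_comm, smul_mul_assoc, h4, smul_neg, smul_neg]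

/-- The square-zero block element built from 4 generators. -/
noncomputable def xblk (f : ℕ → ι) (s : ℝ) (k : ℕ) : Cl P M :=
  gen P M (f (4*k)) -
    s • (gen P M (f (4*k+1)) * (gen P M (f (4*k+2)) * gen P M (f (4*k+3))))

/-- Product of blocks `m, m+1, ..., m+c-1`. -/
noncomputable def Pp (f : ℕ → ι) (s : ℝ) (m c : ℕ) : Cl P M :=
  ((List.range c).map (fun k => xblk P M f s (m+k))).prod

/-- The contraction index list for blocks `m, ..., m+c-1`. -/
def Lb (f : ℕ → ι) : ℕ → ℕ → List ι
  | _, 0 => []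
  | m, (c+1) => f (4*m+1) :: f (4*m+2) :: f (4*m+3) :: Lb f (m+1) c

lemma Pp_zero (f : ℕ → ι) (s : ℝ) (m : ℕ) : Pp P M f s m 0 = 1 := by simp [Pp]

lemma Pp_succ (f : ℕ → ι) (s : ℝ) (m c : ℕ) :
    Pp P M f s m (c+1) = xblk P M f s m * Pp P M f s (m+1) c := by
  rw [Pp, List.range_succ_eq_map, List.map_cons, List.prod_cons, add_zero, List.map_map]
  rw [Pp]
  have heq : List.map ((fun k => xblk P M f s (m + k)) ∘ Nat.succ) (List.range c)
      = List.map (fun k => xblk P M f s (m + 1 + k)) (List.range c) := by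
    apply List.map_congr_left
    intro k _
    show xblk P M f s (m + (k+1)) = xblk P M f s (m + 1 + k)
    congr 1
    omega
  rw [heq]

lemma xblk_mul (f : ℕ → ι) (s : ℝ) (k : ℕ) (y : Cl P M) :
    xblk P M f s k * y = gen P M (f (4*k)) * y -
      s • (gen P M (f (4*k+1)) * (gen P M (f (4*k+2)) * (gen P M (f (4*k+3)) * y))) := by
  rw [xblk, sub_mul, smul_mul_assoc, mul_assoc, mul_assoc]

lemma Dk_Pp_zero (f : ℕ → ι) (hf : Function.Injective f) (s : ℝ) (j : ℕ) :
    ∀ c m, j < 4*m → Dk P M (f j) (Pp P M f s m c) = 0 := by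
  intro c
  induction c with
  | zero => intro m _; rw [Pp_zero]; exact Dk_one P M _
  | succ c ih =>
    intro m hj
    have hne : ∀ r : ℕ, j < r → ¬(f r = f j) := by
      intro r hr e
      exact absurd (hf e) (by omega)
    have hih : Dk P M (f j) (Pp P M f s (m+1) c) = 0 := ih (m+1) (by omega)
    rw [Pp_succ, xblk_mul, map_sub, map_smul,
      Dk_gen_mul, Dk_gen_mul, Dk_gen_mul, Dk_gen_mul,
      if_neg (hne (4*m) (by omega)),
      if_neg (hne (4*m+1) (by omega)),
      if_neg (hne (4*m+2) (by omega)),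
      if_neg (hne (4*m+3) (by omega)), hih]
    simp

lemma Fl_Lb_Pp (f : ℕ → ι) (hf : Function.Injective f) (s : ℝ) :
    ∀ c m, Fl P M (Lb f m c) (Pp P M f s m c) = ((-s)^c) • (1 : Cl P M) := by
  intro c
  induction c with
  | zero => intro m; simp [Pp_zero, Lb]
  | succ c ih =>
    intro m
    have hne : ∀ r r' : ℕ, r ≠ r' → ¬(f r = f r') := fun r r' hr e => hr (hf e)
    have hV : ∀ j, j < 4*(m+1) → Dk P M (f j) (Pp P M f s (m+1) c) = 0 :=
      fun j hj => Dk_Pp_zero P M f hf s j c (m+1) hj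
    show Fl P M (Lb f (m+1) c)
      (Dk P M (f (4*m+3)) (Dk P M (f (4*m+2)) (Dk P M (f (4*m+1)) (Pp P M f s m (c+1)))))
      = _
    have step1 : Dk P M (f (4*m+1)) (Pp P M f s m (c+1))
        = -(s • (gen P M (f (4*m+2)) * (gen P M (f (4*m+3)) * Pp P M f s (m+1) c))) := by
      rw [Pp_succ, xblk_mul, map_sub, map_smul,
        Dk_gen_mul, Dk_gen_mul, Dk_gen_mul, Dk_gen_mul,
        if_neg (hne (4*m) (4*m+1) (by omega)),
        if_pos rfl,
        if_neg (hne (4*m+2) (4*m+1) (by omega)),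
        if_neg (hne (4*m+3) (4*m+1) (by omega)),
        hV (4*m+1) (by omega)]
      simp
    have step2 : Dk P M (f (4*m+2))
        (-(s • (gen P M (f (4*m+2)) * (gen P M (f (4*m+3)) * Pp P M f s (m+1) c))))
        = -(s • (gen P M (f (4*m+3)) * Pp P M f s (m+1) c)) := by
      rw [map_neg, map_smul, Dk_gen_mul, Dk_gen_mul,
        if_pos rfl,
        if_neg (hne (4*m+3) (4*m+2) (by omega)),
        hV (4*m+2) (by omega)]
      simp
    have step3 : Dk P M (f (4*m+3))
        (-(s • (gen P M (f (4*m+3)) * Pp P M f s (m+1) c)))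
        = -(s • Pp P M f s (m+1) c) := by
      rw [map_neg, map_smul, Dk_gen_mul, if_pos rfl, hV (4*m+3) (by omega)]
      simp
    rw [step1, step2, step3, map_neg, map_smul, ih (m+1)]
    rw [smul_smul, pow_succ]
    rw [← neg_smul]
    congr 1
    ring

theorem not_artinian_Z (f : ℕ → ι) (hf : Function.Injective f)
    (hw : ∀ n, cliffordWeight P M (f n) = 0) : ¬ IsArtinianRing (Cl P M) := by
  letI : Invertible (2:ℝ) := invertibleOfNonzero two_ne_zero
  apply not_artinian_of_seq (fun n => gen P M (f n))
  · intro n; rw [gen_sq, hw, map_zero]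
  · intro m n h; exact gen_anticomm P M (fun e => h (hf e))
  · intro n h0
    have hl : ((List.range n).map f).Nodup := (List.nodup_range (n := n)).map hf
    have hpl : prodL P M ((List.range n).map f) = 0 := by
      rw [prodL, List.map_map]
      exact h0
    have h1 := Fl_prodL_self P M _ hl
    rw [hpl, map_zero] at h1
    exact zero_ne_one h1

theorem not_artinian_PM (f : ℕ → ι) (hf : Function.Injective f) (s : ℝ) (hs : s * s = 1)
    (hw : ∀ n, cliffordWeight P M (f n) = s) : ¬ IsArtinianRing (Cl P M) := by
  letI : Invertible (2:ℝ) := invertibleOfNonzero two_ne_zero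
  have hgsq : ∀ n, gen P M (f n) * gen P M (f n) = algebraMap ℝ (Cl P M) s := by
    intro n; rw [gen_sq, hw]
  have hganti : ∀ m n : ℕ, m ≠ n →
      gen P M (f m) * gen P M (f n) = -(gen P M (f n) * gen P M (f m)) :=
    fun m n h => gen_anticomm P M (fun e => h (hf e))
  apply not_artinian_of_seq (xblk P M f s)
  · -- squares vanish
    intro k
    exact blk_sq_zero _ _ _ _ s hs (hgsq _) (hgsq _) (hgsq _) (hgsq _)
      (hganti _ _ (by omega)) (hganti _ _ (by omega)) (hganti _ _ (by omega))
      (hganti _ _ (by omega)) (hganti _ _ (by omega)) (hganti _ _ (by omega))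
  · -- anticommute
    intro j k hjk
    have h4 : ∀ r r' : ℕ, r ≠ r' →
        gen P M (f r) * gen P M (f r') = -(gen P M (f r') * gen P M (f r)) :=
      hganti
    set a := gen P M (f (4*j)); set b := gen P M (f (4*j+1))
    set c := gen P M (f (4*j+2)); set d := gen P M (f (4*j+3))
    set a' := gen P M (f (4*k)); set b' := gen P M (f (4*k+1))
    set c' := gen P M (f (4*k+2)); set d' := gen P M (f (4*k+3))
    apply blk_anti
    · exact h4 _ _ (by omega)
    · exact anti_mul_odd a b' c' d' (h4 _ _ (by omega)) (h4 _ _ (by omega))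
        (h4 _ _ (by omega))
    · exact anti_symm (anti_mul_odd a' b c d (h4 _ _ (by omega)) (h4 _ _ (by omega))
        (h4 _ _ (by omega)))
    · -- m * m' anticommute
      have hb' : (b*(c*d)) * b' = -(b' * (b*(c*d))) :=
        anti_symm (anti_mul_odd b' b c d (h4 _ _ (by omega)) (h4 _ _ (by omega))
          (h4 _ _ (by omega)))
      have hc' : (b*(c*d)) * c' = -(c' * (b*(c*d))) :=
        anti_symm (anti_mul_odd c' b c d (h4 _ _ (by omega)) (h4 _ _ (by omega))
          (h4 _ _ (by omega)))
      have hd' : (b*(c*d)) * d' = -(d' * (b*(c*d))) :=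
        anti_symm (anti_mul_odd d' b c d (h4 _ _ (by omega)) (h4 _ _ (by omega))
          (h4 _ _ (by omega)))
      exact anti_mul_odd (b*(c*d)) b' c' d' hb' hc' hd'
  · -- products nonzero
    intro n h0
    have hPp : Pp P M f s 0 n = 0 := by
      rw [Pp]
      simpa using h0
    have h1 := Fl_Lb_Pp P M f hf s n 0
    rw [hPp, map_zero] at h1
    have hsne : s ≠ 0 := fun e => by rw [e, mul_zero] at hs; exact zero_ne_one hs
    have hps : ((-s)^n : ℝ) ≠ 0 := pow_ne_zero _ (neg_ne_zero.mpr hsne)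
    have : (1 : Cl P M) = 0 := by
      have h2 := congrArg (fun y => ((-s)^n)⁻¹ • y) h1
      simpa [smul_smul, inv_mul_cancel₀ hps] using h2.symm
    exact one_ne_zero this

section Finite

/-- Key rewriting lemma: multiplying a sorted product of generators by one generator stays in
the span of sorted products with controlled index sets. -/
lemma gen_mul_sorted [LinearOrder ι] :
    ∀ (l : List ι), l.Pairwise (· < ·) → ∀ i : ι,
      gen P M i * prodL P M l ∈ Submodule.span ℝ
        (prodL P M '' {m : List ι | m.Pairwise (· < ·) ∧ ∀ x ∈ m, x = i ∨ x ∈ l}) := by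
  intro l
  induction l with
  | nil =>
    intro _ i
    apply Submodule.subset_span
    exact ⟨[i], ⟨List.pairwise_singleton _ i, by simp⟩, by simp⟩
  | cons j t ih =>
    intro hsort i
    have hjt : ∀ b ∈ t, j < b := (List.pairwise_cons.mp hsort).1
    have htsort : t.Pairwise (· < ·) := (List.pairwise_cons.mp hsort).2
    rcases lt_trichotomy i j with h | h | h
    · apply Submodule.subset_span
      refine ⟨i :: j :: t, ⟨?_, ?_⟩, by simp⟩
      · refine List.pairwise_cons.mpr ⟨?_, hsort⟩
        intro b hb
        rcases List.mem_cons.mp hb with rfl | hb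
        · exact h
        · exact lt_trans h (hjt b hb)
      · intro x hx
        rcases List.mem_cons.mp hx with rfl | hx
        · exact Or.inl rfl
        · exact Or.inr hx
    · subst h
      rw [prodL_cons, ← mul_assoc, gen_sq, ← Algebra.smul_def]
      exact Submodule.smul_mem _ _ (Submodule.subset_span
        ⟨t, ⟨htsort, fun x hx => Or.inr (List.mem_cons_of_mem _ hx)⟩, rfl⟩)
    · -- j < i
      have hne : i ≠ j := ne_of_gt h
      have key : gen P M i * prodL P M (j :: t)
          = -(gen P M j * (gen P M i * prodL P M t)) := by
        rw [prodL_cons, ← mul_assoc, gen_anticomm P M hne, neg_mul, mul_assoc]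
      rw [key]
      apply Submodule.neg_mem
      have hmem := ih htsort i
      -- push gen j through the span
      refine Submodule.span_induction ?_ ?_ ?_ ?_ hmem
      · rintro y ⟨m, ⟨hmsort, hmel⟩, rfl⟩
        apply Submodule.subset_span
        have hjm : ∀ b ∈ m, j < b := by
          intro b hb
          rcases hmel b hb with rfl | hbt
          · exact h
          · exact hjt b hbt
        refine ⟨j :: m, ⟨List.pairwise_cons.mpr ⟨hjm, hmsort⟩, ?_⟩, by simp⟩
        intro x hx
        rcases List.mem_cons.mp hx with rfl | hx
        · exact Or.inr List.mem_cons_self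
        · rcases hmel x hx with rfl | hxt
          · exact Or.inl rfl
          · exact Or.inr (List.mem_cons_of_mem _ hxt)
      · simp
      · intro y z _ _ hy hz
        rw [mul_add]; exact Submodule.add_mem _ hy hz
      · intro r y _ hy
        rw [mul_smul_comm]; exact Submodule.smul_mem _ _ hy

lemma artinian_of_finite (hfin : Finite ι) : IsArtinianRing (Cl P M) := by
  cases nonempty_fintype ι
  letI : LinearOrder ι := LinearOrder.lift' (Fintype.equivFin ι) (Equiv.injective _)
  set E : Set (Cl P M) := prodL P M '' {l : List ι | l.Pairwise (· < ·)} with hE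
  have hEfin : E.Finite := by
    apply Set.Finite.image
    apply Set.Finite.subset (List.finite_length_le ι (Fintype.card ι))
    intro l hl
    exact List.Nodup.length_le_card hl.nodup
  have hgen : ∀ i : ι, ∀ y ∈ Submodule.span ℝ E, gen P M i * y ∈ Submodule.span ℝ E := by
    intro i y hy
    refine Submodule.span_induction ?_ ?_ ?_ ?_ hy
    · rintro z ⟨l, hl, rfl⟩
      refine Submodule.span_le.mpr ?_ (gen_mul_sorted P M l hl i)
      rintro w ⟨m, ⟨hm, _⟩, rfl⟩
      exact Submodule.subset_span ⟨m, hm, rfl⟩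
    · simp
    · intro y z _ _ hy hz; rw [mul_add]; exact Submodule.add_mem _ hy hz
    · intro r y _ hy; rw [mul_smul_comm]; exact Submodule.smul_mem _ _ hy
  have hι : ∀ (v : ι →₀ ℝ), ∀ y ∈ Submodule.span ℝ E,
      CliffordAlgebra.ι (cliffordQ P M) v * y ∈ Submodule.span ℝ E := by
    intro v y hy
    have hv : CliffordAlgebra.ι (cliffordQ P M) v
        = v.sum (fun i c => c • gen P M i) := by
      conv_lhs => rw [← Finsupp.sum_single v]
      rw [map_finsuppSum]
      congr 1
      ext i c
      rw [gen, ← map_smul]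
      congr 1
      rw [Finsupp.smul_single, smul_eq_mul, mul_one]
    rw [hv, Finsupp.sum, Finset.sum_mul]
    apply Submodule.sum_mem
    intro i _
    rw [smul_mul_assoc]
    exact Submodule.smul_mem _ _ (hgen i y hy)
  have hone : (1 : Cl P M) ∈ Submodule.span ℝ E :=
    Submodule.subset_span ⟨[], by simp, by simp⟩
  have htop : ∀ z : Cl P M, z ∈ Submodule.span ℝ E := by
    have hmul : ∀ z : Cl P M, ∀ y ∈ Submodule.span ℝ E, z * y ∈ Submodule.span ℝ E := by
      intro z
      induction z using CliffordAlgebra.induction with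
      | algebraMap r =>
        intro y hy
        rw [← Algebra.smul_def]
        exact Submodule.smul_mem _ _ hy
      | ι v => exact hι v
      | mul x1 x2 ih1 ih2 =>
        intro y hy
        rw [mul_assoc]
        exact ih1 _ (ih2 y hy)
      | add x1 x2 ih1 ih2 =>
        intro y hy
        rw [add_mul]
        exact Submodule.add_mem _ (ih1 y hy) (ih2 y hy)
    intro z
    simpa using hmul z 1 hone
  haveI : Module.Finite ℝ (Cl P M) :=
    ⟨(Submodule.fg_def).mpr ⟨E, hEfin, le_antisymm le_top (fun z _ => htop z)⟩⟩
  exact IsArtinianRing.of_finite ℝ (Cl P M)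

end Finite
end ClProof

open Classical in
/-- `C(p,q,z)` is left Artinian iff `p + q < ∞` and `z < ∞`. -/
theorem artinian_iff_finite {ι : Type} (P M Z : Set ι)
    (hPM : Disjoint P M) (hPZ : Disjoint P Z) (hMZ : Disjoint M Z)
    (hU : P ∪ M ∪ Z = Set.univ) :
    IsArtinianRing (Cl P M) ↔ (P ∪ M).Finite ∧ Z.Finite := by
  constructor
  · intro hA
    by_contra hcon
    rw [not_and_or] at hcon
    rcases hcon with h | h
    · have hPM' : P.Infinite ∨ M.Infinite := by
        by_contra h2
        push_neg at h2
        exact h (Set.Finite.union h2.1 h2.2)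
      rcases hPM' with hP | hM
      · let e := Set.Infinite.natEmbedding P hP
        refine ClProof.not_artinian_PM P M (fun n => (e n : ι))
          (fun a b hab => ?_) 1 (by norm_num) (fun n => ?_) hA
        · exact e.injective (Subtype.ext hab)
        · rw [cliffordWeight, if_pos (e n).2]
      · let e := Set.Infinite.natEmbedding M hM
        refine ClProof.not_artinian_PM P M (fun n => (e n : ι))
          (fun a b hab => ?_) (-1) (by norm_num) (fun n => ?_) hA
        · exact e.injective (Subtype.ext hab)
        · rw [cliffordWeight, if_neg (Set.disjoint_right.mp hPM (e n).2),
            if_pos (e n).2]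
    · have hZ : Z.Infinite := h
      let e := Set.Infinite.natEmbedding Z hZ
      refine ClProof.not_artinian_Z P M (fun n => (e n : ι))
        (fun a b hab => ?_) (fun n => ?_) hA
      · exact e.injective (Subtype.ext hab)
      · rw [cliffordWeight, if_neg (Set.disjoint_right.mp hPZ (e n).2),
          if_neg (Set.disjoint_right.mp hMZ (e n).2)]
  · rintro ⟨h1, h2⟩
    have hfin : Finite ι := Set.finite_univ_iff.mp (hU ▸ (h1.union h2))
    exact ClProof.artinian_of_finite P M hfin
end

section
/- The Clifford algebra C = C(p,q,z) is left Noetherian if and only if both p + q < ∞ and z < ∞. -/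
namespace NoethAux

open CliffordAlgebra

variable {ι : Type} (P M : Set ι)

/-- Product of generators over a list. -/
noncomputable def PG (l : List ι) : Cl P M := (l.map (gen P M)).prod

@[simp] lemma PG_nil : PG P M [] = 1 := rfl

@[simp] lemma PG_cons (i : ι) (t : List ι) : PG P M (i :: t) = gen P M i * PG P M t := by
  simp [PG]

lemma bilin_single_same (i : ι) :
    cliffordBilin P M (Finsupp.single i 1) (Finsupp.single i 1) = cliffordWeight P M i := by
  rw [cliffordBilin, Finsupp.lsum_single]
  simp [LinearMap.toSpanSingleton_apply, Finsupp.lapply_apply, Finsupp.single_apply]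

lemma bilin_single_ne {i j : ι} (h : j ≠ i) :
    cliffordBilin P M (Finsupp.single i 1) (Finsupp.single j 1) = 0 := by
  rw [cliffordBilin, Finsupp.lsum_single]
  simp [LinearMap.toSpanSingleton_apply, Finsupp.lapply_apply, Finsupp.single_apply, h]

lemma Q_single (i : ι) : cliffordQ P M (Finsupp.single i 1) = cliffordWeight P M i := by
  rw [cliffordQ, LinearMap.BilinMap.toQuadraticMap_apply]
  exact bilin_single_same P M i

lemma polar_single (i j : ι) (h : i ≠ j) :
    QuadraticMap.polar (⇑(cliffordQ P M)) (Finsupp.single i 1) (Finsupp.single j 1) = 0 := by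
  rw [QuadraticMap.polar]
  simp only [cliffordQ, LinearMap.BilinMap.toQuadraticMap_apply, map_add, LinearMap.add_apply]
  rw [bilin_single_same, bilin_single_same, bilin_single_ne P M h.symm, bilin_single_ne P M h]
  ring

lemma gen_sq (i : ι) :
    gen P M i * gen P M i = algebraMap ℝ (Cl P M) (cliffordWeight P M i) := by
  rw [gen, ι_sq_scalar, Q_single]

lemma gen_anticomm {i j : ι} (h : i ≠ j) :
    gen P M i * gen P M j = -(gen P M j * gen P M i) := by
  rw [gen, gen, ι_mul_ι_comm, polar_single P M i j h, map_zero, zero_sub]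

lemma mul_gen_comm {i j : ι} (h : i ≠ j) (x : Cl P M) :
    gen P M i * (gen P M j * x) = -(gen P M j * (gen P M i * x)) := by
  rw [← mul_assoc, gen_anticomm P M h, neg_mul, mul_assoc]

/-- Annihilation operator. -/
noncomputable abbrev Con (i : ι) : Cl P M →ₗ[ℝ] Cl P M :=
  contractLeft (Finsupp.lapply i)

@[simp] lemma Con_one (i : ι) : Con P M i 1 = 0 := contractLeft_one (Q := cliffordQ P M) (Finsupp.lapply i)

@[simp] lemma Con_algebraMap (i : ι) (r : ℝ) :
    Con P M i (algebraMap ℝ (Cl P M) r) = 0 :=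
  contractLeft_algebraMap (Q := cliffordQ P M) (Finsupp.lapply i) r

lemma Con_gen_mul_same (i : ι) (y : Cl P M) :
    Con P M i (gen P M i * y) = y - gen P M i * Con P M i y := by
  rw [gen, contractLeft_ι_mul]
  simp

lemma Con_gen_mul_ne {i j : ι} (h : j ≠ i) (y : Cl P M) :
    Con P M i (gen P M j * y) = -(gen P M j * Con P M i y) := by
  rw [gen, contractLeft_ι_mul]
  simp [Finsupp.lapply_apply, Finsupp.single_apply, h]

lemma Con_PG_of_not_mem {i : ι} {l : List ι} (h : i ∉ l) : Con P M i (PG P M l) = 0 := by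
  induction l with
  | nil => simp
  | cons j t ih =>
    have hj : j ≠ i := fun e => h (e ▸ (List.mem_cons_self (a := j) (l := t)))
    have ht : i ∉ t := fun e => h (List.mem_cons_of_mem _ e)
    rw [PG_cons, Con_gen_mul_ne P M hj, ih ht, mul_zero, neg_zero]

lemma Con_mul (i : ι) (x y : Cl P M) :
    Con P M i (x * y) = Con P M i x * y + involute x * Con P M i y := by
  induction x using CliffordAlgebra.induction generalizing y with
  | algebraMap r =>
    rw [← Algebra.smul_def, map_smul, Con_algebraMap, zero_mul, zero_add, AlgHom.commutes,
      Algebra.smul_def]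
  | ι v =>
    rw [contractLeft_ι_mul, contractLeft_ι, involute_ι, Algebra.smul_def, neg_mul,
      sub_eq_add_neg]
  | mul a b ha hb =>
    rw [mul_assoc, ha, hb, ha, map_mul]
    noncomm_ring
  | add a b ha hb =>
    rw [add_mul, map_add, map_add, add_mul, map_add]
    rw [ha, hb]
    noncomm_ring

end NoethAux

namespace NoethAux

variable {ι : Type} (P M : Set ι)

/-- Iterated contraction along a list. -/
noncomputable def ConL : List ι → Cl P M → Cl P M
  | [], x => x
  | i :: t, x => ConL t (Con P M i x)

@[simp] lemma ConL_nil (x : Cl P M) : ConL P M [] x = x := rfl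

@[simp] lemma ConL_cons (i : ι) (t : List ι) (x : Cl P M) :
    ConL P M (i :: t) x = ConL P M t (Con P M i x) := rfl

@[simp] lemma ConL_zero (l : List ι) : ConL P M l 0 = 0 := by
  induction l with
  | nil => rfl
  | cons i t ih => rw [ConL_cons, map_zero, ih]

lemma ConL_add (l : List ι) (x y : Cl P M) :
    ConL P M l (x + y) = ConL P M l x + ConL P M l y := by
  induction l generalizing x y with
  | nil => rfl
  | cons i t ih => rw [ConL_cons, map_add, ih, ConL_cons, ConL_cons]

lemma ConL_sub (l : List ι) (x y : Cl P M) :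
    ConL P M l (x - y) = ConL P M l x - ConL P M l y := by
  induction l generalizing x y with
  | nil => rfl
  | cons i t ih => rw [ConL_cons, map_sub, ih, ConL_cons, ConL_cons]

lemma ConL_append (l l' : List ι) (x : Cl P M) :
    ConL P M (l ++ l') x = ConL P M l' (ConL P M l x) := by
  induction l generalizing x with
  | nil => rfl
  | cons i t ih => rw [List.cons_append, ConL_cons, ih, ConL_cons]

/-- Contracting a product of distinct generators along the same list yields `1`. -/
lemma ConL_PG_self {l : List ι} (h : l.Nodup) : ConL P M l (PG P M l) = 1 := by
  induction l with
  | nil => simp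
  | cons i t ih =>
    have hit : i ∉ t := (List.nodup_cons.mp h).1
    have ht : t.Nodup := (List.nodup_cons.mp h).2
    rw [PG_cons, ConL_cons, Con_gen_mul_same, Con_PG_of_not_mem P M hit, mul_zero, sub_zero]
    exact ih ht

/-- Contracting `w * e_l` along `l` returns `w`, provided the contractions kill `w`
and `w` is `involute`-invariant. -/
lemma ConL_mul_PG {w : Cl P M} {l : List ι} (h : l.Nodup)
    (hw : ∀ i ∈ l, Con P M i w = 0) (hinv : CliffordAlgebra.involute w = w) :
    ConL P M l (w * PG P M l) = w := by
  induction l with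
  | nil => simp
  | cons i t ih =>
    have hit : i ∉ t := (List.nodup_cons.mp h).1
    have ht : t.Nodup := (List.nodup_cons.mp h).2
    rw [PG_cons, ConL_cons, Con_mul, hw i List.mem_cons_self, zero_mul, zero_add, hinv,
      Con_gen_mul_same, Con_PG_of_not_mem P M hit, mul_zero, sub_zero]
    exact ih ht (fun j hj => hw j (List.mem_cons_of_mem _ hj))

lemma ConL_eq_zero_of_head {i : ι} {t : List ι} {w : Cl P M} (h : Con P M i w = 0) :
    ConL P M (i :: t) w = 0 := by
  rw [ConL_cons, h, ConL_zero]

/-- A ring with a separating family is not left-Noetherian. -/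
lemma not_noetherian_of_sep {A : Type*} [Ring A] (x y : ℕ → A)
    (h0 : ∀ k n, k < n → x k * y n = 0) (h1 : ∀ n, x n * y n ≠ 0) :
    ¬ IsNoetherianRing A := by
  intro H
  have H' : IsNoetherian A A := isNoetherianRing_iff.mp H
  have mono : Monotone fun n => Submodule.span A (x '' Set.Iio n) := by
    intro a b hab
    exact Submodule.span_mono (Set.image_mono (fun k hk => lt_of_lt_of_le hk hab))
  obtain ⟨n, hn⟩ := monotone_stabilizes_iff_noetherian.mpr H'
    ⟨fun n => Submodule.span A (x '' Set.Iio n), mono⟩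
  have hx : x n ∈ Submodule.span A (x '' Set.Iio n) := by
    have : x n ∈ Submodule.span A (x '' Set.Iio (n + 1)) :=
      Submodule.subset_span ⟨n, Nat.lt_succ_self n, rfl⟩
    have he : Submodule.span A (x '' Set.Iio n) = Submodule.span A (x '' Set.Iio (n + 1)) :=
      hn (n + 1) (Nat.le_succ n)
    rw [he]
    exact this
  have hzero : ∀ z ∈ Submodule.span A (x '' Set.Iio n), z * y n = 0 := by
    intro z hz
    induction hz using Submodule.span_induction with
    | mem z hzs =>
      obtain ⟨k, hk, rfl⟩ := hzs
      exact h0 k n hk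
    | zero => rw [zero_mul]
    | add a b _ _ ha hb => rw [add_mul, ha, hb, add_zero]
    | smul a z _ hz => rw [smul_eq_mul, mul_assoc, hz, mul_zero]
  exact h1 n (hzero _ hx)

lemma one_ne_zero_Cl : (1 : Cl P M) ≠ 0 := one_ne_zero

end NoethAux

namespace NoethAux

variable {ι : Type} (P M : Set ι)

lemma gen_mul_PG_zero {i : ι} {l : List ι} (hQ : cliffordWeight P M i = 0) (hmem : i ∈ l) :
    gen P M i * PG P M l = 0 := by
  induction l with
  | nil => cases hmem
  | cons j t ih =>
    rw [PG_cons, ← mul_assoc]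
    by_cases hij : i = j
    · subst hij
      rw [gen_sq, hQ, map_zero, zero_mul]
    · have hit : i ∈ t := by
        rcases List.mem_cons.mp hmem with h | h
        · exact absurd h hij
        · exact h
      rw [gen_anticomm P M hij, neg_mul, mul_assoc, ih hit, mul_zero, neg_zero]

/-- If `Z` consists of weight-zero generators and is infinite, the algebra is
not Noetherian. -/
lemma not_noetherian_of_infinite_nil {Z : Set ι} (hZ : Z.Infinite)
    (hw : ∀ i ∈ Z, cliffordWeight P M i = 0) : ¬ IsNoetherianRing (Cl P M) := by
  classical
  let e : ℕ ↪ ↥Z := Set.Infinite.natEmbedding Z hZ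
  let f : ℕ → ι := fun k => (e k : ι)
  have hfZ : ∀ k, f k ∈ Z := fun k => (e k).2
  have hfinj : Function.Injective f :=
    Subtype.val_injective.comp e.injective
  refine not_noetherian_of_sep (fun k => gen P M (f k))
      (fun n => PG P M ((List.range n).map f)) ?_ ?_
  · intro k n hkn
    refine gen_mul_PG_zero P M (hw _ (hfZ k)) ?_
    exact List.mem_map_of_mem (f := f) (List.mem_range.mpr hkn)
  · intro n hzero
    have hnodup : (f n :: (List.range n).map f).Nodup := by
      refine List.nodup_cons.mpr ⟨?_, ?_⟩
      · intro hmem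
        obtain ⟨k, hk, he⟩ := List.mem_map.mp hmem
        have hkn : k = n := hfinj he
        have := List.mem_range.mp hk
        omega
      · exact (List.nodup_range (n := n)).map hfinj
    have h1 : ConL P M (f n :: (List.range n).map f)
        (PG P M (f n :: (List.range n).map f)) = 1 := ConL_PG_self P M hnodup
    rw [PG_cons] at h1
    rw [hzero, ConL_zero] at h1
    exact one_ne_zero_Cl P M h1.symm
end NoethAux

namespace NoethAux

open CliffordAlgebra

variable {ι : Type} (P M : Set ι)

lemma pair_sq {a b : ι} (h : a ≠ b) :
    (gen P M a * gen P M b) * (gen P M a * gen P M b)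
      = algebraMap ℝ (Cl P M) (-(cliffordWeight P M a * cliffordWeight P M b)) := by
  calc (gen P M a * gen P M b) * (gen P M a * gen P M b)
      = gen P M a * ((gen P M b * gen P M a) * gen P M b) := by
        rw [mul_assoc, ← mul_assoc (gen P M b)]
    _ = gen P M a * (-(gen P M a * gen P M b) * gen P M b) := by
        rw [gen_anticomm P M (Ne.symm h)]
    _ = -(gen P M a * gen P M a * (gen P M b * gen P M b)) := by
        simp only [neg_mul, mul_neg, mul_assoc]
    _ = algebraMap ℝ (Cl P M) (-(cliffordWeight P M a * cliffordWeight P M b)) := by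
        rw [gen_sq, gen_sq, ← map_mul, ← map_neg]

lemma quad_comm {a b c d : ι} (hac : a ≠ c) (had : a ≠ d) (hbc : b ≠ c) (hbd : b ≠ d) :
    (gen P M a * gen P M b) * (gen P M c * gen P M d)
      = (gen P M c * gen P M d) * (gen P M a * gen P M b) := by
  have key : ∀ x : Cl P M, gen P M a * (gen P M b * (gen P M c * (gen P M d * x)))
      = gen P M c * (gen P M d * (gen P M a * (gen P M b * x))) := by
    intro x
    rw [mul_gen_comm P M hbc, mul_neg, mul_gen_comm P M hbd, mul_neg, mul_neg, neg_neg,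
      mul_gen_comm P M hac, mul_gen_comm P M had, mul_neg, neg_neg]
  rw [mul_assoc, mul_assoc]
  simpa only [mul_one] using key 1

lemma not_noetherian_of_infinite_unit {S : Set ι} (hS : S.Infinite) (ε : ℝ) (hε : ε * ε = 1)
    (hw : ∀ i ∈ S, cliffordWeight P M i = ε) : ¬ IsNoetherianRing (Cl P M) := by
  classical
  let e : ℕ ↪ ↥S := Set.Infinite.natEmbedding S hS
  let g : ℕ → ι := fun k => (e k : ι)
  have hgS : ∀ k, g k ∈ S := fun k => (e k).2
  have hginj : Function.Injective g := Subtype.val_injective.comp e.injective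
  have hgne : ∀ {a b : ℕ}, a ≠ b → g a ≠ g b := fun h he => h (hginj he)
  -- pairs
  let p : ℕ → Cl P M := fun m => gen P M (g (2*m)) * gen P M (g (2*m+1))
  have hp : ∀ m, p m = gen P M (g (2*m)) * gen P M (g (2*m+1)) := fun m => rfl
  have p_sq : ∀ m, p m * p m = algebraMap ℝ (Cl P M) (-1) := by
    intro m
    rw [hp, pair_sq P M (hgne (by omega)), hw _ (hgS _), hw _ (hgS _), hε]
  have p_comm : ∀ {m m'}, m ≠ m' → p m * p m' = p m' * p m := by
    intro m m' h
    rw [hp, hp]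
    exact quad_comm P M (hgne (by omega)) (hgne (by omega)) (hgne (by omega)) (hgne (by omega))
  -- commuting involutions u
  let u : ℕ → Cl P M := fun k => p (2*k) * p (2*k+1)
  have hu : ∀ k, u k = p (2*k) * p (2*k+1) := fun k => rfl
  have u_sq : ∀ k, u k * u k = 1 := by
    intro k
    calc u k * u k = p (2*k) * ((p (2*k+1) * p (2*k)) * p (2*k+1)) := by
          rw [hu]; rw [mul_assoc, ← mul_assoc (p (2*k+1))]
      _ = p (2*k) * ((p (2*k) * p (2*k+1)) * p (2*k+1)) := by rw [p_comm (by omega)]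
      _ = (p (2*k) * p (2*k)) * (p (2*k+1) * p (2*k+1)) := by
          simp only [mul_assoc]
      _ = 1 := by rw [p_sq, p_sq, ← map_mul]; norm_num
  have u_commute : ∀ {k k'}, k ≠ k' → Commute (u k) (u k') := by
    intro k k' h
    have c1 : Commute (p (2*k)) (p (2*k')) := p_comm (by omega)
    have c2 : Commute (p (2*k)) (p (2*k'+1)) := p_comm (by omega)
    have c3 : Commute (p (2*k+1)) (p (2*k')) := p_comm (by omega)
    have c4 : Commute (p (2*k+1)) (p (2*k'+1)) := p_comm (by omega)
    exact (c1.mul_right c2).mul_left (c3.mul_right c4)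
  -- blocks
  let bl : ℕ → List ι := fun k => [g (4*k), g (4*k+1), g (4*k+2), g (4*k+3)]
  have hbl : ∀ k, bl k = [g (4*k), g (4*k+1), g (4*k+2), g (4*k+3)] := fun k => rfl
  have bl_nodup : ∀ k, (bl k).Nodup := by
    intro k
    rw [hbl]
    simp only [List.nodup_cons, List.mem_cons, List.not_mem_nil, or_false, List.nodup_nil,
      and_true, not_or, hginj.eq_iff, not_false_eq_true]
    omega
  have u_eq_PG : ∀ k, u k = PG P M (bl k) := by
    intro k
    have h1 : 2*(2*k) = 4*k := by ring
    have h2 : 2*(2*k)+1 = 4*k+1 := by ring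
    have h3 : 2*(2*k+1) = 4*k+2 := by ring
    have h4 : 2*(2*k+1)+1 = 4*k+3 := by ring
    rw [hu, hp, hp, hbl, h1, h3]
    simp only [PG_cons, PG_nil, mul_one, mul_assoc]
  have not_mem_bl : ∀ {k k' : ℕ}, k ≠ k' → ∀ i ∈ bl k, i ∉ bl k' := by
    intro k k' h i hi hi'
    rw [hbl] at hi hi'
    simp only [List.mem_cons, List.not_mem_nil, or_false] at hi hi'
    rcases hi with rfl | rfl | rfl | rfl <;>
      rcases hi' with h' | h' | h' | h' <;>
      · have := hginj h'; omega
  -- involute fixes u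
  have inv_u : ∀ k, involute (u k) = u k := by
    intro k
    rw [hu, hp, hp, map_mul, map_mul, map_mul]
    simp only [gen, involute_ι, neg_mul_neg]
  -- the products W n = (1+u 0) ⋯ (1+u (n-1))
  let W : ℕ → Cl P M := fun n => Nat.rec (motive := fun _ => Cl P M) 1 (fun n w => w * (1 + u n)) n
  have W_zero : W 0 = 1 := rfl
  have W_succ : ∀ n, W (n+1) = W n * (1 + u n) := fun n => rfl
  have inv_W : ∀ n, involute (W n) = W n := by
    intro n
    induction n with
    | zero => rw [W_zero, map_one]
    | succ n ih => rw [W_succ, map_mul, ih, map_add, map_one, inv_u]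
  have comm_u_W : ∀ m k, m ≤ k → Commute (u k) (W m) := by
    intro m
    induction m with
    | zero => intro k _; rw [W_zero]; exact Commute.one_right _
    | succ m ih =>
      intro k hk
      rw [W_succ]
      exact (ih k (by omega)).mul_right
        ((Commute.one_right _).add_right (u_commute (by omega)))
  have sep_zero : ∀ k n, k < n → (1 - u k) * W n = 0 := by
    intro k n
    induction n with
    | zero => omega
    | succ n ih =>
      intro hk
      rw [W_succ, ← mul_assoc]
      by_cases hkn : k < n
      · rw [ih hkn, zero_mul]
      · have hk' : k = n := by omega
        subst hk'
        have hcomm : (1 - u k) * W k = W k * (1 - u k) := by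
          rw [sub_mul, one_mul, mul_sub, mul_one, (comm_u_W k k le_rfl).eq]
        rw [hcomm, mul_assoc]
        have hfac : (1 - u k) * (1 + u k) = 1 - u k * u k := by noncomm_ring
        rw [hfac, u_sq, sub_self, mul_zero]
  -- contractions kill W n
  have Con_W : ∀ n i, (∀ k, k < n → i ∉ bl k) → Con P M i (W n) = 0 := by
    intro n
    induction n with
    | zero => intro i _; rw [W_zero]; exact Con_one P M i
    | succ n ih =>
      intro i hi
      rw [W_succ, Con_mul, ih i (fun k hk => hi k (by omega)), zero_mul, zero_add, inv_W,
        map_add, Con_one, u_eq_PG, Con_PG_of_not_mem P M (hi n (by omega)), zero_add, mul_zero]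
  let TL : ℕ → List ι := fun n => Nat.rec (motive := fun _ => List ι) [] (fun n t => bl n ++ t) n
  have TL_succ : ∀ n, TL (n+1) = bl n ++ TL n := fun n => rfl
  have hblW : ∀ n, ∀ i ∈ bl n, Con P M i (W n) = 0 := by
    intro n i hi
    exact Con_W n i (fun k hk hmem => not_mem_bl (show n ≠ k by omega) i hi hmem)
  have ConL_bl_W : ∀ n, ConL P M (bl n) (W n) = 0 := by
    intro n
    rw [hbl]
    exact ConL_eq_zero_of_head P M (hblW n (g (4*n)) (by rw [hbl]; simp))
  have ConL_bl_Wu : ∀ n, ConL P M (bl n) (W n * u n) = W n := by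
    intro n
    rw [u_eq_PG]
    exact ConL_mul_PG P M (bl_nodup n) (hblW n) (inv_W n)
  have ConL_TL_W : ∀ n, ConL P M (TL n) (W n) = 1 := by
    intro n
    induction n with
    | zero => rw [W_zero]; rfl
    | succ n ih =>
      rw [TL_succ, ConL_append, W_succ, mul_add, mul_one, ConL_add, ConL_bl_W, ConL_bl_Wu,
        zero_add, ih]
  -- conclude
  refine not_noetherian_of_sep (fun k => 1 - u k) W sep_zero ?_
  intro n h
  have hcomm : (1 - u n) * W n = W n - W n * u n := by
    rw [sub_mul, one_mul, (comm_u_W n n le_rfl).eq]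
  have hval : ConL P M (TL (n+1)) ((1 - u n) * W n) = -1 := by
    rw [hcomm, TL_succ, ConL_append, ConL_sub, ConL_bl_W, ConL_bl_Wu, ConL_sub, ConL_zero,
      ConL_TL_W, zero_sub]
  rw [h, ConL_zero] at hval
  exact one_ne_zero_Cl P M (neg_eq_zero.mp hval.symm)

end NoethAux

namespace NoethAux

open CliffordAlgebra

variable {ι : Type} (P M : Set ι)

lemma gen_mul_PG_sorted [LinearOrder ι] :
    ∀ (l : List ι), l.Pairwise (· < ·) → ∀ i : ι, ∃ (r : ℝ) (m : List ι),
      m.Pairwise (· < ·) ∧ (∀ x ∈ m, x ∈ i :: l) ∧ gen P M i * PG P M l = r • PG P M m := by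
  intro l
  induction l with
  | nil =>
    intro _ i
    refine ⟨1, [i], by simp, by simp, ?_⟩
    simp
  | cons j t ih =>
    intro hsort i
    have hj : ∀ b ∈ t, j < b := (List.pairwise_cons.mp hsort).1
    have ht : t.Pairwise (· < ·) := (List.pairwise_cons.mp hsort).2
    rcases lt_trichotomy i j with hij | rfl | hij
    · refine ⟨1, i :: j :: t, ?_, fun x hx => hx, ?_⟩
      · refine List.pairwise_cons.mpr ⟨?_, hsort⟩
        intro b hb
        rcases List.mem_cons.mp hb with rfl | hbt
        · exact hij
        · exact lt_trans hij (hj b hbt)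
      · simp only [one_smul, PG_cons]
    · refine ⟨cliffordWeight P M i, t, ht, ?_, ?_⟩
      · intro x hx
        exact List.mem_cons_of_mem _ (List.mem_cons_of_mem _ hx)
      · rw [PG_cons, ← mul_assoc, gen_sq, Algebra.smul_def]
    · obtain ⟨r, m, hms, hsub, heq⟩ := ih ht i
      refine ⟨-r, j :: m, ?_, ?_, ?_⟩
      · refine List.pairwise_cons.mpr ⟨?_, hms⟩
        intro b hb
        rcases List.mem_cons.mp (hsub b hb) with rfl | hbt
        · exact hij
        · exact hj b hbt
      · intro x hx
        rcases List.mem_cons.mp hx with rfl | hxm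
        · exact List.mem_cons_of_mem _ List.mem_cons_self
        · rcases List.mem_cons.mp (hsub x hxm) with rfl | h2
          · exact List.mem_cons_self
          · exact List.mem_cons_of_mem _ (List.mem_cons_of_mem _ h2)
      · rw [PG_cons, mul_gen_comm P M (ne_of_gt hij), heq, mul_smul_comm, PG_cons, neg_smul]

lemma span_sorted_eq_top [LinearOrder ι] :
    Submodule.span ℝ (PG P M '' {l : List ι | l.Pairwise (· < ·)}) = ⊤ := by
  set Wsp := Submodule.span ℝ (PG P M '' {l : List ι | l.Pairwise (· < ·)}) with hWsp
  have h_one : (1 : Cl P M) ∈ Wsp := Submodule.subset_span ⟨[], by simp, rfl⟩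
  have h_gen_mul : ∀ (i : ι) (y : Cl P M), y ∈ Wsp → gen P M i * y ∈ Wsp := by
    intro i y hy
    induction hy using Submodule.span_induction with
    | mem x hx =>
      obtain ⟨l, hl, rfl⟩ := hx
      obtain ⟨r, m, hms, _, heq⟩ := gen_mul_PG_sorted P M l hl i
      rw [heq]
      exact Wsp.smul_mem r (Submodule.subset_span ⟨m, hms, rfl⟩)
    | zero => rw [mul_zero]; exact Wsp.zero_mem
    | add a b _ _ ha hb => rw [mul_add]; exact Wsp.add_mem ha hb
    | smul r a _ ha => rw [mul_smul_comm]; exact Wsp.smul_mem r ha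
  have h_iota_mul : ∀ (v : ι →₀ ℝ), ∀ y ∈ Wsp, CliffordAlgebra.ι (cliffordQ P M) v * y ∈ Wsp := by
    intro v
    induction v using Finsupp.induction with
    | zero => intro y _; rw [map_zero, zero_mul]; exact Wsp.zero_mem
    | single_add a b f _ _ ih =>
      intro y hy
      rw [map_add, add_mul]
      refine Wsp.add_mem ?_ (ih y hy)
      have hb : Finsupp.single a b = b • Finsupp.single a 1 := by
        rw [Finsupp.smul_single, smul_eq_mul, mul_one]
      rw [hb, map_smul, smul_mul_assoc]
      exact Wsp.smul_mem b (h_gen_mul a y hy)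
  have h_all : ∀ x : Cl P M, x ∈ Wsp ∧ ∀ y ∈ Wsp, x * y ∈ Wsp := by
    intro x
    induction x using CliffordAlgebra.induction with
    | algebraMap r =>
      constructor
      · rw [Algebra.algebraMap_eq_smul_one]
        exact Wsp.smul_mem r h_one
      · intro y hy
        rw [← Algebra.smul_def]
        exact Wsp.smul_mem r hy
    | ι v =>
      constructor
      · have := h_iota_mul v 1 h_one
        rwa [mul_one] at this
      · exact h_iota_mul v
    | mul a b ha hb =>
      constructor
      · exact ha.2 b hb.1
      · intro y hy
        rw [mul_assoc]
        exact ha.2 _ (hb.2 y hy)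
    | add a b ha hb =>
      constructor
      · exact Wsp.add_mem ha.1 hb.1
      · intro y hy
        rw [add_mul]
        exact Wsp.add_mem (ha.2 y hy) (hb.2 y hy)
  exact eq_top_iff.mpr fun x _ => (h_all x).1

lemma noetherian_of_finite (hfin : (Set.univ : Set ι).Finite) : IsNoetherianRing (Cl P M) := by
  classical
  have hfι : Finite ι := Set.finite_univ_iff.mp hfin
  obtain ⟨n, ⟨eqv⟩⟩ := Finite.exists_equiv_fin ι
  letI : LinearOrder ι := LinearOrder.lift' (eqv : ι → Fin n) eqv.injective
  haveI := Fintype.ofFinite ι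
  haveI : IsAntisymm ι (· < ·) := ⟨fun a b h1 h2 => absurd h2 (lt_asymm h1)⟩
  haveI : Finite {l : List ι | l.Pairwise (· < ·)} := by
    refine Finite.of_injective
      (fun l => ((l : List ι).toFinset : Finset ι)) ?_
    rintro ⟨l1, hl1⟩ ⟨l2, hl2⟩ h12
    have hn1 : l1.Nodup := hl1.nodup
    have hn2 : l2.Nodup := hl2.nodup
    have hperm : List.Perm l1 l2 := by
      refine List.perm_of_nodup_nodup_toFinset_eq hn1 hn2 ?_
      simpa using h12
    exact Subtype.ext (hperm.eq_of_pairwise (fun a b _ _ h1 h2 => absurd h2 (lt_asymm h1)) hl1 hl2)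
  have hS_fin : (PG P M '' {l : List ι | l.Pairwise (· < ·)}).Finite :=
    Set.Finite.image _ (Set.toFinite _)
  haveI : Module.Finite ℝ (Cl P M) :=
    ⟨Submodule.fg_def.mpr ⟨_, hS_fin, span_sorted_eq_top P M⟩⟩
  have hNoeth : IsNoetherian ℝ (Cl P M) := inferInstance
  exact isNoetherianRing_iff.mpr (isNoetherian_of_tower ℝ hNoeth)

end NoethAux

/-- STATEMENT 11: `C(p,q,z)` is left Noetherian iff `p + q < ∞` and `z < ∞`. -/
theorem noetherian_iff_finite {ι : Type} (P M Z : Set ι)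
    (hPM : Disjoint P M) (hPZ : Disjoint P Z) (hMZ : Disjoint M Z)
    (hU : P ∪ M ∪ Z = Set.univ) :
    IsNoetherianRing (Cl P M) ↔ (P ∪ M).Finite ∧ Z.Finite := by
  constructor
  · intro h
    constructor
    · by_contra hPMinf
      have hinf : (P ∪ M).Infinite := hPMinf
      rcases Set.infinite_union.mp hinf with hP | hM
      · exact NoethAux.not_noetherian_of_infinite_unit P M hP 1 (by norm_num)
          (fun i hi => by simp [cliffordWeight, hi]) h
      · refine NoethAux.not_noetherian_of_infinite_unit P M hM (-1) (by norm_num)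
          (fun i hi => ?_) h
        have hiP : i ∉ P := fun hp => (Set.disjoint_left.mp hPM) hp hi
        simp [cliffordWeight, hiP, hi]
    · by_contra hZinf
      have hinf : Z.Infinite := hZinf
      refine NoethAux.not_noetherian_of_infinite_nil P M hinf (fun i hi => ?_) h
      have hiP : i ∉ P := fun hp => (Set.disjoint_left.mp hPZ) hp hi
      have hiM : i ∉ M := fun hm => (Set.disjoint_left.mp hMZ) hm hi
      simp [cliffordWeight, hiP, hiM]
  · rintro ⟨h1, h2⟩
    have huniv : (Set.univ : Set ι).Finite := by
      rw [← hU]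
      exact (h1.union h2)
    exact NoethAux.noetherian_of_finite P M huniv
end

section
/- For any finite subset S ⊆ Z, the two-sided ideal I_S of the Clifford algebra C = C(p,q,z) generated by {e_λ : λ ∈ S} is nilpotent; in fact I_S^{|S|+1} = 0. -/
/-! ### Auxiliary lemmas -/

section lemmas
variable {ι : Type} {P M : Set ι} {a : ι}

lemma bilin_single_left (h0 : cliffordWeight P M a = 0) (w : ι →₀ ℝ) :
    cliffordBilin P M (Finsupp.single a 1) w = 0 := by
  unfold cliffordBilin
  rw [Finsupp.lsum_single]
  simp [h0]

lemma bilin_single_right (h0 : cliffordWeight P M a = 0) (w : ι →₀ ℝ) :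
    cliffordBilin P M w (Finsupp.single a 1) = 0 := by
  unfold cliffordBilin
  rw [Finsupp.lsum_apply, Finsupp.sum, LinearMap.sum_apply]
  apply Finset.sum_eq_zero
  intro i _
  simp only [LinearMap.toSpanSingleton_apply, LinearMap.smul_apply, Finsupp.lapply_apply,
    smul_eq_mul]
  by_cases hia : i = a
  · subst hia; rw [h0]; ring
  · rw [Finsupp.single_eq_of_ne' (Ne.symm hia)]; ring

lemma polar_single_zero (h0 : cliffordWeight P M a = 0) (w : ι →₀ ℝ) :
    QuadraticMap.polar (cliffordQ P M) (Finsupp.single a 1) w = 0 := by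
  unfold cliffordQ
  rw [LinearMap.BilinMap.polar_toQuadraticMap, bilin_single_left h0, bilin_single_right h0,
    add_zero]

lemma Q_single_zero (h0 : cliffordWeight P M a = 0) :
    cliffordQ P M (Finsupp.single a 1) = 0 := by
  unfold cliffordQ
  rw [LinearMap.BilinMap.toQuadraticMap_apply, bilin_single_left h0]

lemma gen_mul_comm (h0 : cliffordWeight P M a = 0) (x : Cl P M) :
    gen P M a * x = CliffordAlgebra.involute x * gen P M a := by
  induction x using CliffordAlgebra.induction with
  | algebraMap r => rw [AlgHom.commutes]; exact (Algebra.commutes r _).symm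
  | ι w =>
      rw [CliffordAlgebra.involute_ι, neg_mul]
      have h := CliffordAlgebra.ι_mul_ι_add_swap (Q := cliffordQ P M) (Finsupp.single a 1) w
      rw [polar_single_zero h0, map_zero] at h
      exact eq_neg_of_add_eq_zero_left h
  | mul x y hx hy =>
      rw [map_mul, ← mul_assoc, hx, mul_assoc, hy, mul_assoc]
  | add x y hx hy => rw [map_add, mul_add, add_mul, hx, hy]

lemma gen_sq_zero (h0 : cliffordWeight P M a = 0) : gen P M a * gen P M a = 0 := by
  unfold gen
  rw [CliffordAlgebra.ι_sq_scalar, Q_single_zero h0, map_zero]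

lemma gen_sandwich (h0 : cliffordWeight P M a = 0) (x : Cl P M) :
    gen P M a * x * gen P M a = 0 := by
  rw [gen_mul_comm h0 x, mul_assoc, gen_sq_zero h0, mul_zero]

end lemmas

section ideal_lemmas
variable {A : Type*} [Ring A] (g : A)

lemma span_singleton_sandwich (hg : ∀ c : A, g * c * g = 0) :
    ∀ v ∈ TwoSidedIdeal.span {g}, ∀ c : A, ∀ v' ∈ TwoSidedIdeal.span {g}, v * c * v' = 0 := by
  have claim1 : ∀ v' ∈ TwoSidedIdeal.span {g}, ∀ c : A, g * c * v' = 0 := by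
    intro v' hv'
    refine (TwoSidedIdeal.mem_mk' _ _ _ _ _ _ v').mp
      (TwoSidedIdeal.mem_span_iff.mp hv'
        (TwoSidedIdeal.mk' {x : A | ∀ c : A, g * c * x = 0}
          (fun c => by simp)
          (fun {x y} hx hy c => by rw [mul_add, hx, hy, add_zero])
          (fun {x} hx c => by rw [mul_neg, hx, neg_zero])
          (fun {x y} hy c => by rw [← mul_assoc, mul_assoc g c x, hy])
          (fun {x y} hx c => by rw [← mul_assoc, hx, zero_mul]))
        ?_)
    intro z hz
    rw [SetLike.mem_coe, TwoSidedIdeal.mem_mk']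
    rw [Set.mem_singleton_iff] at hz
    subst hz
    exact fun c => hg c
  intro v hv
  refine (TwoSidedIdeal.mem_mk' _ _ _ _ _ _ v).mp
    (TwoSidedIdeal.mem_span_iff.mp hv
      (TwoSidedIdeal.mk' {x : A | ∀ c : A, ∀ v' ∈ TwoSidedIdeal.span {g}, x * c * v' = 0}
        (fun c v' _ => by simp)
        (fun {x y} hx hy c v' hv' => by
          rw [add_mul, add_mul, hx c v' hv', hy c v' hv', add_zero])
        (fun {x} hx c v' hv' => by rw [neg_mul, neg_mul, hx c v' hv', neg_zero])
        (fun {x y} hy c v' hv' => by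
          rw [mul_assoc x y c, mul_assoc x (y * c) v', hy c v' hv', mul_zero])
        (fun {x y} hx c v' hv' => by
          rw [mul_assoc x y c, hx (y * c) v' hv']))
      ?_)
  intro z hz
  rw [SetLike.mem_coe, TwoSidedIdeal.mem_mk']
  rw [Set.mem_singleton_iff] at hz
  subst hz
  exact fun c v' hv' => claim1 v' hv' c

/-- Decomposition of elements of the span of an insertion. -/
lemma span_insert_decomp (s : Set A) (x : A)
    (hx : x ∈ TwoSidedIdeal.span (insert g s)) :
    ∃ u ∈ TwoSidedIdeal.span s, ∃ v ∈ TwoSidedIdeal.span {g}, x = u + v := by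
  set J := TwoSidedIdeal.span s
  set K := TwoSidedIdeal.span {g}
  refine (TwoSidedIdeal.mem_mk' _ _ _ _ _ _ x).mp
    (TwoSidedIdeal.mem_span_iff.mp hx
      (TwoSidedIdeal.mk' {x : A | ∃ u ∈ J, ∃ v ∈ K, x = u + v}
        ⟨0, J.zero_mem, 0, K.zero_mem, by simp⟩
        (fun {x y} hx hy => by
          obtain ⟨u, hu, v, hv, rfl⟩ := hx
          obtain ⟨u', hu', v', hv', rfl⟩ := hy
          exact ⟨u + u', J.add_mem hu hu', v + v', K.add_mem hv hv',
            add_add_add_comm u v u' v'⟩)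
        (fun {x} hx => by
          obtain ⟨u, hu, v, hv, rfl⟩ := hx
          exact ⟨-u, J.neg_mem hu, -v, K.neg_mem hv, neg_add u v⟩)
        (fun {x y} hy => by
          obtain ⟨u, hu, v, hv, rfl⟩ := hy
          exact ⟨x * u, J.mul_mem_left x u hu, x * v, K.mul_mem_left x v hv, mul_add x u v⟩)
        (fun {x y} hx => by
          obtain ⟨u, hu, v, hv, rfl⟩ := hx
          exact ⟨u * y, J.mul_mem_right u y hu, v * y, K.mul_mem_right v y hv, add_mul u v y⟩))
      ?_)
  intro z hz
  rw [SetLike.mem_coe, TwoSidedIdeal.mem_mk']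
  rcases hz with rfl | hz
  · exact ⟨0, J.zero_mem, z, TwoSidedIdeal.subset_span rfl, (zero_add z).symm⟩
  · exact ⟨z, TwoSidedIdeal.subset_span hz, 0, K.zero_mem, (add_zero z).symm⟩

end ideal_lemmas

/-- Main auxiliary induction. -/
lemma main_aux {ι : Type} (P M Z : Set ι) (hPZ : Disjoint P Z) (hMZ : Disjoint M Z) :
    ∀ S : Finset ι, ↑S ⊆ Z → ∀ l : List (Cl P M), S.card + 1 ≤ l.length →
      (∀ x ∈ l, x ∈ TwoSidedIdeal.span (gen P M '' ↑S)) → l.prod = 0 := by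
  classical
  intro S
  induction S using Finset.induction_on with
  | empty =>
      intro _ l hlen hmem
      match l with
      | x :: t =>
        have hx : x ∈ TwoSidedIdeal.span (gen P M '' (↑(∅ : Finset ι))) := hmem x (by simp)
        rw [Finset.coe_empty, Set.image_empty] at hx
        have hx0 : x = 0 := TwoSidedIdeal.mem_span_iff.mp hx ⊥ (Set.empty_subset _)
        rw [List.prod_cons, hx0, zero_mul]
  | @insert a S' ha ih =>
      intro hsub l hlen hmem
      have haZ : a ∈ Z := hsub (by simp)
      have hS' : ↑S' ⊆ Z := fun i hi => hsub (by simp [hi])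
      have h0 : cliffordWeight P M a = 0 := by
        unfold cliffordWeight
        rw [if_neg (fun hP => Set.disjoint_left.mp hPZ hP haZ),
          if_neg (fun hM => Set.disjoint_left.mp hMZ hM haZ)]
      set g : Cl P M := gen P M a with hg
      set J := TwoSidedIdeal.span (gen P M '' ↑S') with hJ
      set K := TwoSidedIdeal.span {g} with hK
      set n := S'.card with hn
      have hcard : (insert a S').card = n + 1 := Finset.card_insert_of_notMem ha
      have sand : ∀ v ∈ K, ∀ c : Cl P M, ∀ v' ∈ K, v * c * v' = 0 :=
        span_singleton_sandwich g (fun c => gen_sandwich h0 c)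
      have helperJ : ∀ m : List (Cl P M), (∀ x ∈ m, x ∈ J) → n + 1 ≤ m.length →
          m.prod = 0 := by
        intro m hm hlenm
        have htake : (m.take (n + 1)).length = n + 1 := by
          rw [List.length_take]; omega
        have hprod : m.prod = (m.take (n + 1)).prod * (m.drop (n + 1)).prod := by
          rw [← List.prod_append, List.take_append_drop]
        rw [hprod, ih hS' (m.take (n + 1)) (by omega)
          (fun x hx => hm x (List.take_subset _ _ hx)), zero_mul]
      have decomp : ∀ x ∈ l, ∃ u ∈ J, ∃ v ∈ K, x = u + v := by
        intro x hx
        have hx' := hmem x hx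
        rw [Finset.coe_insert, Set.image_insert_eq] at hx'
        exact span_insert_decomp g _ x hx'
      -- Lemma B: a product with a pure-J prefix, one K factor, and a J-run, followed by
      -- decomposable elements, vanishes when the total J-count is at least n+1.
      have lemmaB : ∀ l' : List (Cl P M), (∀ x ∈ l', ∃ u ∈ J, ∃ v ∈ K, x = u + v) →
          ∀ m m₂ : List (Cl P M), (∀ x ∈ m, x ∈ J) → (∀ x ∈ m₂, x ∈ J) →
          ∀ v ∈ K, n + 1 ≤ m.length + m₂.length + l'.length →
          m.prod * v * m₂.prod * l'.prod = 0 := by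
        intro l'
        induction l' with
        | nil =>
            intro _ m m₂ hm hm₂ v hv hcount
            rw [List.prod_nil, mul_one]
            match m₂ with
            | [] =>
                rw [List.prod_nil, mul_one, helperJ m hm (by simpa using hcount), zero_mul]
            | h :: t =>
                have key : m.prod * v * (h :: t).prod = (m ++ (v * h) :: t).prod := by
                  rw [List.prod_append, List.prod_cons, List.prod_cons]
                  simp only [mul_assoc]
                rw [key]
                apply helperJ
                · intro x hx
                  rcases List.mem_append.mp hx with hx | hx
                  · exact hm x hx
                  · rcases List.mem_cons.mp hx with rfl | hx
                    · exact TwoSidedIdeal.mul_mem_left J v h (hm₂ h (by simp))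
                    · exact hm₂ x (by simp [hx])
                · simp only [List.length_append, List.length_cons, List.length_nil]
                    at hcount ⊢
                  omega
        | cons x l' ihl =>
            intro hdec m m₂ hm hm₂ v hv hcount
            obtain ⟨u, hu, v', hv', rfl⟩ := hdec x (by simp)
            rw [List.prod_cons, add_mul, mul_add]
            have h1 : m.prod * v * m₂.prod * (u * l'.prod) =
                m.prod * v * (m₂ ++ [u]).prod * l'.prod := by
              rw [List.prod_append, List.prod_cons, List.prod_nil, mul_one]
              simp only [mul_assoc]
            have h2 : m.prod * v * m₂.prod * (v' * l'.prod) =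
                m.prod * (v * m₂.prod * v') * l'.prod := by
              simp only [mul_assoc]
            rw [h1, h2, sand v hv m₂.prod v' hv', mul_zero, zero_mul, add_zero]
            apply ihl (fun y hy => hdec y (by simp [hy])) m (m₂ ++ [u]) hm
            · intro y hy
              rcases List.mem_append.mp hy with hy | hy
              · exact hm₂ y hy
              · rcases List.mem_singleton.mp hy with rfl
                exact hu
            · exact hv
            · simp only [List.length_append, List.length_singleton, List.length_cons]
                at hcount ⊢
              omega
      -- Lemma A: a product with a pure-J prefix followed by decomposable elements vanishes
      -- when the total count is at least n+2.
      have lemmaA : ∀ l' : List (Cl P M), (∀ x ∈ l', ∃ u ∈ J, ∃ v ∈ K, x = u + v) →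
          ∀ m : List (Cl P M), (∀ x ∈ m, x ∈ J) → n + 2 ≤ m.length + l'.length →
          m.prod * l'.prod = 0 := by
        intro l'
        induction l' with
        | nil =>
            intro _ m hm hcount
            rw [List.prod_nil, mul_one]
            exact helperJ m hm (by simp only [List.length_nil] at hcount; omega)
        | cons x l' ihl =>
            intro hdec m hm hcount
            obtain ⟨u, hu, v', hv', rfl⟩ := hdec x (by simp)
            rw [List.prod_cons, add_mul, mul_add]
            have h1 : m.prod * (u * l'.prod) = (m ++ [u]).prod * l'.prod := by
              rw [List.prod_append, List.prod_cons, List.prod_nil, mul_one]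
              simp only [mul_assoc]
            have h2 : m.prod * (v' * l'.prod) = m.prod * v' * List.prod [] * l'.prod := by
              rw [List.prod_nil, mul_one]
              simp only [mul_assoc]
            rw [h1, h2]
            have hcount' : n + 1 ≤ m.length + ([] : List (Cl P M)).length + l'.length := by
              simp only [List.length_nil, List.length_cons] at hcount ⊢
              omega
            rw [lemmaB l' (fun y hy => hdec y (by simp [hy])) m ([] : List (Cl P M)) hm
              (by simp) v' hv' hcount']
            rw [ihl (fun y hy => hdec y (by simp [hy])) (m ++ [u])
              (by
                intro y hy
                rcases List.mem_append.mp hy with hy | hy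
                · exact hm y hy
                · rcases List.mem_singleton.mp hy with rfl
                  exact hu)
              (by simp only [List.length_append, List.length_singleton, List.length_cons]
                    at hcount ⊢
                  omega)]
            rw [add_zero]
      have := lemmaA l decomp [] (by simp) (by
        rw [hcard] at hlen
        simp only [List.length_nil]
        omega)
      rwa [List.prod_nil, one_mul] at this

/-- STATEMENT 12: for any finite `S ⊆ Z`, the two-sided ideal `I_S` generated by
`{e_λ : λ ∈ S}` is nilpotent; in fact `I_S^{|S|+1} = 0`. -/
theorem span_finite_nilpotent {ι : Type} (P M Z : Set ι)
    (hPM : Disjoint P M) (hPZ : Disjoint P Z) (hMZ : Disjoint M Z)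
    (hU : P ∪ M ∪ Z = Set.univ) (S : Finset ι) (hS : ↑S ⊆ Z) :
    (TwoSidedIdeal.span (gen P M '' ↑S)).IsNilpotentIdeal ∧
    ∀ l : List (Cl P M), l.length = S.card + 1 →
      (∀ x ∈ l, x ∈ TwoSidedIdeal.span (gen P M '' ↑S)) → l.prod = 0 := by
  have key := main_aux P M Z hPZ hMZ S hS
  exact ⟨⟨S.card + 1, Nat.succ_pos _, fun l hlen hmem => key l (le_of_eq hlen.symm) hmem⟩,
    fun l hlen hmem => key l (le_of_eq hlen.symm) hmem⟩
end
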